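/- arXiv:0803.3486 — 11 statements merged into one kernel-verified Lean document; each statement's English description precedes it below -/
import Mathlib

section
/- Let (μ,ν) be a family of type D_p^{(2)} in a group G, with p odd. Then for all k, l, t ∈ ℤ/p: (i) μ_k μ_l = μ_{t(l−k)+k} μ_{t(l−k)+l}; (ii) μ_k ν_l = μ_{2t(l−k)+k} ν_{2t(l−k)+l}; (iii) μ_k ν_l = ν_{(2t+1)(l−k)+k} μ_{(2t+1)(l−k)+l}. -/
/-- For `p` odd and `(μ, ν)` of type `D_p^{(2)}` in a group `G`,
for all `k l t ∈ ℤ/p`: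
(i) `μ_k μ_l = μ_{t(l−k)+k} μ_{t(l−k)+l}`;
(ii) `μ_k ν_l = μ_{2t(l−k)+k} ν_{2t(l−k)+l}`;
(iii) `μ_k ν_l = ν_{(2t+1)(l−k)+k} μ_{(2t+1)(l−k)+l}`. -/
theorem stmt3 {G : Type*} [Group G] {p : ℕ} (hp : 1 ≤ p) (hodd : Odd p)
    (μ ν : ZMod p → G)
    (hμμ : ∀ i j : ZMod p, μ i * μ j * (μ i)⁻¹ = μ (2 * i - j))
    (hνν : ∀ i j : ZMod p, ν i * ν j * (ν i)⁻¹ = ν (2 * i - j))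
    (hμν : ∀ i j : ZMod p, μ i * ν j * (μ i)⁻¹ = ν (2 * i - j))
    (hνμ : ∀ i j : ZMod p, ν i * μ j * (ν i)⁻¹ = μ (2 * i - j)) :
    ∀ k l t : ZMod p,
      μ k * μ l = μ (t * (l - k) + k) * μ (t * (l - k) + l) ∧
      μ k * ν l = μ (2 * t * (l - k) + k) * ν (2 * t * (l - k) + l) ∧
      μ k * ν l = ν ((2 * t + 1) * (l - k) + k) * μ ((2 * t + 1) * (l - k) + l) := by
  intro k l t
  -- key rewriting lemmas
  have key1 : ∀ a b : ZMod p, μ a * μ b = μ b * μ (2 * b - a) := by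
    intro a b
    have := hμμ b (2 * b - a)
    have h2 : (2 : ZMod p) * b - (2 * b - a) = a := by ring
    rw [h2] at this
    calc μ a * μ b = (μ b * μ (2 * b - a) * (μ b)⁻¹) * μ b := by rw [this]
      _ = μ b * μ (2 * b - a) := by group
  have key2 : ∀ a b : ZMod p, μ a * ν b = ν b * μ (2 * b - a) := by
    intro a b
    have := hνμ b (2 * b - a)
    have h2 : (2 : ZMod p) * b - (2 * b - a) = a := by ring
    rw [h2] at this
    calc μ a * ν b = (ν b * μ (2 * b - a) * (ν b)⁻¹) * ν b := by rw [this]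
      _ = ν b * μ (2 * b - a) := by group
  have key3 : ∀ a b : ZMod p, ν a * μ b = μ b * ν (2 * b - a) := by
    intro a b
    have := hμν b (2 * b - a)
    have h2 : (2 : ZMod p) * b - (2 * b - a) = a := by ring
    rw [h2] at this
    calc ν a * μ b = (μ b * ν (2 * b - a) * (μ b)⁻¹) * μ b := by rw [this]
      _ = μ b * ν (2 * b - a) := by group
  have main : ∀ n : ℕ,
      μ k * μ l = μ ((n : ZMod p) * (l - k) + k) * μ ((n : ZMod p) * (l - k) + l) ∧
      μ k * ν l = μ (2 * (n : ZMod p) * (l - k) + k) * ν (2 * (n : ZMod p) * (l - k) + l) ∧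
      μ k * ν l = ν ((2 * (n : ZMod p) + 1) * (l - k) + k) *
        μ ((2 * (n : ZMod p) + 1) * (l - k) + l) := by
    intro n
    induction n with
    | zero =>
      refine ⟨by push_cast; ring_nf, by push_cast; ring_nf, ?_⟩
      have := key2 k l
      push_cast
      rw [this]
      congr 1 <;> congr 1 <;> ring
    | succ n ih =>
      obtain ⟨hi, hii, hiii⟩ := ih
      constructor
      · rw [hi, key1 ((n : ZMod p) * (l - k) + k) ((n : ZMod p) * (l - k) + l)]
        congr 1 <;> congr 1 <;> push_cast <;> ring
      constructor
      · rw [hiii, key3 ((2 * (n : ZMod p) + 1) * (l - k) + k)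
          ((2 * (n : ZMod p) + 1) * (l - k) + l)]
        congr 1 <;> congr 1 <;> push_cast <;> ring
      · rw [hiii, key3 ((2 * (n : ZMod p) + 1) * (l - k) + k)
          ((2 * (n : ZMod p) + 1) * (l - k) + l),
          key2 ((2 * (n : ZMod p) + 1) * (l - k) + l)
            (2 * ((2 * (n : ZMod p) + 1) * (l - k) + l) -
              ((2 * (n : ZMod p) + 1) * (l - k) + k))]
        congr 1 <;> congr 1 <;> push_cast <;> ring
  haveI : NeZero p := ⟨by omega⟩
  obtain ⟨n, rfl⟩ := ZMod.natCast_zmod_surjective t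
  exact main n
end

section
/- Let p be odd and (μ,ν) a family of type D_p^{(2)} in a group G. Then μ_i ν_i = μ_0 ν_0 and ν_i μ_i = ν_0 μ_0 for all i ∈ ℤ/p. -/
/-- For `p` odd and `(μ, ν)` of type `D_p^{(2)}` in a group `G`,
`μ_i ν_i = μ_0 ν_0` and `ν_i μ_i = ν_0 μ_0` for all `i ∈ ℤ/p`. -/
theorem stmt4 {G : Type*} [Group G] {p : ℕ} (hp : 1 ≤ p) (hodd : Odd p)
    (μ ν : ZMod p → G)
    (hμμ : ∀ i j : ZMod p, μ i * μ j * (μ i)⁻¹ = μ (2 * i - j))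
    (hνν : ∀ i j : ZMod p, ν i * ν j * (ν i)⁻¹ = ν (2 * i - j))
    (hμν : ∀ i j : ZMod p, μ i * ν j * (μ i)⁻¹ = ν (2 * i - j))
    (hνμ : ∀ i j : ZMod p, ν i * μ j * (ν i)⁻¹ = μ (2 * i - j)) :
    ∀ i : ZMod p, μ i * ν i = μ 0 * ν 0 ∧ ν i * μ i = ν 0 * μ 0 := by
  haveI : NeZero p := ⟨by omega⟩
  -- 2 is invertible mod p since p is odd
  have hcop : Nat.Coprime 2 p := Nat.coprime_two_left.mpr hodd
  have h2 : ∀ i : ZMod p, ∃ k : ZMod p, 2 * k = i := by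
    intro i
    set u := ZMod.unitOfCoprime 2 hcop with hu
    refine ⟨(↑u⁻¹ : ZMod p) * i, ?_⟩
    have h1 : ((u : ZMod p) * (↑u⁻¹ : ZMod p)) = 1 := by
      rw [← Units.val_mul, mul_inv_cancel, Units.val_one]
    have h2 : (u : ZMod p) = 2 := ZMod.coe_unitOfCoprime 2 hcop
    rw [← h2, ← mul_assoc, h1, one_mul]
  -- ν i and μ i commute
  have hcomm : ∀ i : ZMod p, ν i * μ i = μ i * ν i := by
    intro i
    have h := hνμ i i
    rw [show 2 * i - i = i by ring, mul_inv_eq_iff_eq_mul] at h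
    exact h
  -- z i := (μ i)⁻¹ * ν i commutes with every μ j
  have hz_mu : ∀ i j : ZMod p, ((μ i)⁻¹ * ν i) * μ j = μ j * ((μ i)⁻¹ * ν i) := by
    intro i j
    have h : ν i * μ j * (ν i)⁻¹ = μ i * μ j * (μ i)⁻¹ := (hνμ i j).trans (hμμ i j).symm
    have h2 : (μ i)⁻¹ * (ν i * μ j * (ν i)⁻¹) * ν i
        = (μ i)⁻¹ * (μ i * μ j * (μ i)⁻¹) * ν i := by rw [h]
    calc ((μ i)⁻¹ * ν i) * μ j
        = (μ i)⁻¹ * (ν i * μ j * (ν i)⁻¹) * ν i := by group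
      _ = (μ i)⁻¹ * (μ i * μ j * (μ i)⁻¹) * ν i := h2
      _ = μ j * ((μ i)⁻¹ * ν i) := by group
  -- z is constant
  have hz_shift : ∀ i j : ZMod p, (μ (2*i - j))⁻¹ * ν (2*i - j) = (μ j)⁻¹ * ν j := by
    intro i j
    rw [← hμμ i j, ← hμν i j]
    have h := hz_mu j i
    calc (μ i * μ j * (μ i)⁻¹)⁻¹ * (μ i * ν j * (μ i)⁻¹)
        = μ i * (((μ j)⁻¹ * ν j) * (μ i)⁻¹) := by group
      _ = μ i * ((μ i)⁻¹ * (((μ j)⁻¹ * ν j))) := by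
            have hc : Commute ((μ j)⁻¹ * ν j) (μ i) := h
            rw [hc.inv_right]
      _ = (μ j)⁻¹ * ν j := by group
  have hz_const : ∀ i : ZMod p, (μ i)⁻¹ * ν i = (μ 0)⁻¹ * ν 0 := by
    intro i
    obtain ⟨k, hk⟩ := h2 i
    have := hz_shift k 0
    rw [sub_zero, hk] at this
    exact this
  -- squares commute with everything
  have hsq : ∀ i j : ZMod p, (μ i * μ i) * μ j = μ j * (μ i * μ i) := by
    intro i j
    have h1 := hμμ i j
    have h2' := hμμ i (2*i - j)
    rw [show 2*i - (2*i - j) = j by ring, ← h1] at h2'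
    calc (μ i * μ i) * μ j
        = (μ i * (μ i * μ j * (μ i)⁻¹) * (μ i)⁻¹) * (μ i * μ i) := by group
      _ = μ j * (μ i * μ i) := by rw [h2']
  -- step-by-two invariance of squares
  have hstep : ∀ i : ZMod p, μ (i + 2) * μ (i + 2) = μ i * μ i := by
    intro i
    have hA := hμμ (i+1) i
    rw [show 2*(i+1) - i = i + 2 by ring, mul_inv_eq_iff_eq_mul] at hA
    -- hA : μ (i+1) * μ i = μ (i+2) * μ (i+1)
    have key : (μ (i+2) * μ (i+2)) * (μ (i+1) * μ (i+1))
        = (μ i * μ i) * (μ (i+1) * μ (i+1)) := by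
      calc (μ (i+2) * μ (i+2)) * (μ (i+1) * μ (i+1))
          = μ (i+2) * (μ (i+2) * μ (i+1)) * μ (i+1) := by group
        _ = μ (i+2) * (μ (i+1) * μ i) * μ (i+1) := by rw [← hA]
        _ = (μ (i+2) * μ (i+1)) * (μ i * μ (i+1)) := by group
        _ = (μ (i+1) * μ i) * (μ i * μ (i+1)) := by rw [← hA]
        _ = μ (i+1) * (μ i * μ i) * μ (i+1) := by group
        _ = (μ i * μ i) * (μ (i+1) * μ (i+1)) := by
            rw [← hsq i (i+1), mul_assoc]
    exact mul_right_cancel key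
  -- squares are constant
  have hsqn : ∀ n : ℕ, μ ((2*n : ℕ) : ZMod p) * μ ((2*n : ℕ) : ZMod p) = μ 0 * μ 0 := by
    intro n
    induction n with
    | zero => norm_num
    | succ n ih =>
        have : ((2*(n+1) : ℕ) : ZMod p) = ((2*n : ℕ) : ZMod p) + 2 := by push_cast; ring
        rw [this, hstep ((2*n : ℕ) : ZMod p)]
        exact ih
  have hsq_const : ∀ i : ZMod p, μ i * μ i = μ 0 * μ 0 := by
    intro i
    obtain ⟨k, hk⟩ := h2 i
    obtain ⟨n, hn⟩ := ZMod.natCast_zmod_surjective (n := p) k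
    have : ((2*n : ℕ) : ZMod p) = i := by push_cast; rw [hn, hk]
    rw [← this]
    exact hsqn n
  -- conclusion
  intro i
  have key : μ i * ν i = μ 0 * ν 0 := by
    calc μ i * ν i = (μ i * μ i) * ((μ i)⁻¹ * ν i) := by group
      _ = (μ 0 * μ 0) * ((μ 0)⁻¹ * ν 0) := by rw [hsq_const i, hz_const i]
      _ = μ 0 * ν 0 := by group
  exact ⟨key, by rw [hcomm i, key, ← hcomm 0]⟩
end

section
/- Let p be odd and (μ,ν) of type D_p^{(2)} in a group G. Then for all k, l ∈ ℤ/p and all r ∈ ℤ/p: μ_k μ_l = μ_{k+r} μ_{l+r}, μ_k ν_l = μ_{k+r} ν_{l+r}, and μ_k ν_l = ν_{k+r} μ_{l+r}. -/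
/-- For odd `n`, for any `a` there is `u` with both `u` and `u + a` coprime to `n`. -/
private lemma exists_coprime_both :
    ∀ n : ℕ, Odd n → ∀ a : ℕ, ∃ u : ℕ, Nat.Coprime u n ∧ Nat.Coprime (u + a) n := by
  intro n
  induction n using Nat.recOnPosPrimePosCoprime with
  | prime_pow q k hq hk =>
    intro hodd a
    have hqodd : ¬ (2 ∣ q) := by
      intro h2
      have : 2 ∣ q ^ k := dvd_pow h2 (by omega)
      rcases hodd with ⟨m, hm⟩
      omega
    by_cases hd : q ∣ (1 + a)
    · refine ⟨2, Nat.Coprime.pow_right _ ?_, Nat.Coprime.pow_right _ ?_⟩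
      · exact Nat.prime_two.coprime_iff_not_dvd.mpr hqodd
      · refine (hq.coprime_iff_not_dvd.mpr ?_).symm
        intro h2
        have hone : q ∣ 1 := by
          have h3 := Nat.dvd_sub h2 hd
          rwa [show 2 + a - (1 + a) = 1 by omega] at h3
        exact hq.ne_one (Nat.dvd_one.mp hone)
    · exact ⟨1, (Nat.coprime_one_left _).pow_right _,
        Nat.Coprime.pow_right _ (hq.coprime_iff_not_dvd.mpr hd).symm⟩
  | zero => intro h; simp at h
  | one => intro _ a; exact ⟨1, Nat.coprime_one_right _, Nat.coprime_one_right _⟩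
  | coprime m₁ m₂ hm₁ hm₂ hcop ih₁ ih₂ =>
    intro hodd a
    rw [Nat.odd_mul] at hodd
    obtain ⟨u₁, h₁, h₁'⟩ := ih₁ hodd.1 a
    obtain ⟨u₂, h₂, h₂'⟩ := ih₂ hodd.2 a
    obtain ⟨u, hu₁, hu₂⟩ := Nat.chineseRemainder hcop u₁ u₂
    refine ⟨u, Nat.Coprime.mul_right ?_ ?_, Nat.Coprime.mul_right ?_ ?_⟩
    · unfold Nat.Coprime; rw [Nat.ModEq.gcd_eq hu₁]; exact h₁
    · unfold Nat.Coprime; rw [Nat.ModEq.gcd_eq hu₂]; exact h₂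
    · unfold Nat.Coprime; rw [Nat.ModEq.gcd_eq (hu₁.add_right a)]; exact h₁'
    · unfold Nat.Coprime; rw [Nat.ModEq.gcd_eq (hu₂.add_right a)]; exact h₂'

private lemma exists_unit_unit_add {p : ℕ} [NeZero p] (hodd : Odd p) (a : ZMod p) :
    ∃ u : ZMod p, IsUnit u ∧ IsUnit (u + a) := by
  obtain ⟨u, h1, h2⟩ := exists_coprime_both p hodd a.val
  refine ⟨(u : ZMod p), (ZMod.isUnit_iff_coprime u p).mpr h1, ?_⟩
  have hv : ((a.val : ℕ) : ZMod p) = a := ZMod.natCast_rightInverse a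
  have : (u : ZMod p) + a = ((u + a.val : ℕ) : ZMod p) := by push_cast [hv]; ring
  rw [this]
  exact (ZMod.isUnit_iff_coprime _ p).mpr h2

/-- key homomorphism lemma -/
private lemma q_hom {G : Type*} [Group G] {p : ℕ} [NeZero p]
    (hex : ∀ a : ZMod p, ∃ u : ZMod p, IsUnit u ∧ IsUnit (u + a))
    (q : ZMod p → G) (h0 : q 0 = 1)
    (hT : ∀ i j : ZMod p, q i * q j = q (2 * i + j) * q (-i)) :
    ∀ a b : ZMod p, q (a + b) = q a * q b := by
  set A : ZMod p → ZMod p → G := fun a b => (q (a + b))⁻¹ * (q a * q b) with hAdef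
  have hqA : ∀ a b, q a * q b = q (a + b) * A a b := by
    intro a b; simp only [hAdef]; group
  -- centrality
  have hcommN : ∀ i i' j, A i i' * q j = q j * A (-i) (-i') := by
    intro i i' j
    have e1 : q i * (q i' * q j) = q (2 * (i + i') + j) * q (-i) * q (-i') := by
      rw [hT i' j, show q i * (q (2*i'+j) * q (-i')) = (q i * q (2*i'+j)) * q (-i') by group,
        hT i (2*i'+j), show 2*i + (2*i'+j) = 2*(i+i') + j by ring]
    have e2 : q (i + i') * q j = q (2 * (i + i') + j) * q (-(i + i')) := hT (i+i') j
    have e3 : q (2 * (i + i') + j) = q (i + i') * q j * (q (-(i + i')))⁻¹ := by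
      rw [e2]; group
    rw [e3] at e1
    simp only [hAdef]
    calc (q (i + i'))⁻¹ * (q i * q i') * q j
        = (q (i + i'))⁻¹ * (q i * (q i' * q j)) := by group
      _ = (q (i + i'))⁻¹ * (q (i + i') * q j * (q (-(i + i')))⁻¹ * q (-i) * q (-i')) := by rw [e1]
      _ = q j * ((q (-i + -i'))⁻¹ * (q (-i) * q (-i'))) := by
          rw [show -i + -i' = -(i+i') by ring]; group
  have hsym : ∀ i i', A i i' = A (-i) (-i') := by
    intro i i'
    have := hcommN i i' 0
    simpa [h0] using this
  have hcomm : ∀ i i' j, A i i' * q j = q j * A i i' := by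
    intro i i' j; rw [hcommN i i' j, ← hsym]
  -- cocycle
  have hcoc : ∀ a b c, A (a + b) c * A a b = A a (b + c) * A b c := by
    intro a b c
    have e1 : q a * q b * q c = q (a + b + c) * (A (a + b) c * A a b) := by
      rw [hqA a b, show q (a+b) * A a b * q c = q (a+b) * (A a b * q c) by group,
        hcomm a b c, show q (a+b) * (q c * A a b) = (q (a+b) * q c) * A a b by group,
        hqA (a+b) c]
      group
    have e2 : q a * q b * q c = q (a + b + c) * (A a (b + c) * A b c) := by
      rw [show q a * q b * q c = q a * (q b * q c) by group, hqA b c,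
        show q a * (q (b+c) * A b c) = (q a * q (b+c)) * A b c by group, hqA a (b+c),
        show a + (b + c) = a + b + c by ring]
      group
    exact mul_left_cancel (e1.symm.trans e2)
  -- star
  have hstar : ∀ a b, A a b = A (2 * a + b) (-a) := by
    intro a b
    have e1 : q (a + b) * A a b = q (a + b) * A (2 * a + b) (-a) := by
      rw [← hqA a b, hT a b, hqA (2*a+b) (-a), show 2*a + b + -a = a + b by ring]
    exact mul_left_cancel e1
  have hA0 : ∀ b, A 0 b = 1 := by
    intro b; simp only [hAdef, zero_add, h0, one_mul]; group
  -- iteration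
  have hiter : ∀ (n : ℕ) (a b : ZMod p),
      A a b = A (a + (n : ZMod p) * (a + b)) (b - (n : ZMod p) * (a + b)) := by
    intro n
    induction n with
    | zero => intro a b; simp
    | succ n ih =>
      intro a b
      rw [ih a b, hstar (a + (n : ZMod p) * (a + b)) (b - (n : ZMod p) * (a + b))]
      have i1 : 2 * (a + (n : ZMod p) * (a + b)) + (b - (n : ZMod p) * (a + b))
          = a + ((n : ℕ) + 1 : ZMod p) * (a + b) := by push_cast; ring
      have i2 : -(a + (n : ZMod p) * (a + b)) = b - ((n : ℕ) + 1 : ZMod p) * (a + b) := by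
        push_cast; ring
      rw [i1, i2]
      norm_cast
  have hAunit : ∀ a b, IsUnit (a + b) → A a b = 1 := by
    intro a b hu
    obtain ⟨U, hU⟩ := hu
    set n : ℕ := ((-a) * ↑U⁻¹).val with hn
    have hnc : (n : ZMod p) = (-a) * ↑U⁻¹ := ZMod.natCast_rightInverse _
    have hns : (n : ZMod p) * (a + b) = -a := by
      rw [hnc, ← hU, Units.inv_mul_cancel_right]
    rw [hiter n a b, hns, show a + -a = (0 : ZMod p) by ring,
      show b - -a = a + b by ring]
    exact hA0 _
  -- main
  have hA1 : ∀ a b, A a b = 1 := by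
    intro a b
    obtain ⟨u, hu1, hu2⟩ := hex a
    have hc := hcoc a b (u - b)
    have z1 : A (a + b) (u - b) = 1 := hAunit _ _ (by rw [show a + b + (u - b) = u + a by ring]; exact hu2)
    have z2 : A b (u - b) = 1 := hAunit _ _ (by rw [show b + (u - b) = u by ring]; exact hu1)
    have z3 : A a (b + (u - b)) = 1 := by
      rw [show b + (u - b) = u by ring]
      exact hAunit _ _ (by rw [show a + u = u + a by ring]; exact hu2)
    rw [z1, z2, z3, one_mul, mul_one] at hc
    exact hc
  intro a b
  have h := hA1 a b
  simp only [hAdef] at h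
  exact inv_mul_eq_one.mp h

/-- For `p` odd and `(μ, ν)` of type `D_p^{(2)}` in a group `G`,
for all `k l r ∈ ℤ/p`: `μ_k μ_l = μ_{k+r} μ_{l+r}`, `μ_k ν_l = μ_{k+r} ν_{l+r}`
and `μ_k ν_l = ν_{k+r} μ_{l+r}`. -/
theorem stmt5 {G : Type*} [Group G] {p : ℕ} (hp : 1 ≤ p) (hodd : Odd p)
    (μ ν : ZMod p → G)
    (hμμ : ∀ i j : ZMod p, μ i * μ j * (μ i)⁻¹ = μ (2 * i - j))
    (hνν : ∀ i j : ZMod p, ν i * ν j * (ν i)⁻¹ = ν (2 * i - j))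
    (hμν : ∀ i j : ZMod p, μ i * ν j * (μ i)⁻¹ = ν (2 * i - j))
    (hνμ : ∀ i j : ZMod p, ν i * μ j * (ν i)⁻¹ = μ (2 * i - j)) :
    ∀ k l r : ZMod p,
      μ k * μ l = μ (k + r) * μ (l + r) ∧
      μ k * ν l = μ (k + r) * ν (l + r) ∧
      μ k * ν l = ν (k + r) * μ (l + r) := by
  have hpz : NeZero p := ⟨by omega⟩
  have h2u : IsUnit (2 : ZMod p) := by
    have hc : Nat.Coprime 2 p :=
      Nat.prime_two.coprime_iff_not_dvd.mpr (by rcases hodd with ⟨m, hm⟩; omega)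
    exact_mod_cast (ZMod.isUnit_iff_coprime 2 p).mpr hc
  -- basic conjugation facts
  have hμμ' : ∀ i j : ZMod p, μ i * μ j = μ (2 * i - j) * μ i := by
    intro i j; rw [← hμμ i j]; group
  have hμν' : ∀ i j : ZMod p, μ i * ν j = ν (2 * i - j) * μ i := by
    intro i j; rw [← hμν i j]; group
  have hνμ' : ∀ i j : ZMod p, ν i * μ j = μ (2 * i - j) * ν i := by
    intro i j; rw [← hνμ i j]; group
  -- C := μ 0 * ν 0 commutes with all μ m
  have hCμ : ∀ m : ZMod p, μ m * (μ 0 * ν 0) = (μ 0 * ν 0) * μ m := by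
    intro m
    have e1 : μ m * μ 0 = μ 0 * μ (-m) := by
      have h := hμμ' 0 (-m)
      rw [show 2 * (0:ZMod p) - -m = m by ring] at h
      rw [h]
    have e2 : μ (-m) * ν 0 = ν 0 * μ m := by
      have h := hνμ' 0 m
      rw [show 2 * (0:ZMod p) - m = -m by ring] at h
      rw [← h]
    calc μ m * (μ 0 * ν 0) = (μ m * μ 0) * ν 0 := by group
      _ = μ 0 * (μ (-m) * ν 0) := by rw [e1]; group
      _ = μ 0 * (ν 0 * μ m) := by rw [e2]
      _ = (μ 0 * ν 0) * μ m := by group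
  -- constancy of μ k * ν k
  have hC : ∀ k : ZMod p, μ k * ν k = μ 0 * ν 0 := by
    intro k
    obtain ⟨T, hT2⟩ := id h2u
    have h2m : 2 * (k * ↑T⁻¹) = k := by
      rw [← hT2, mul_comm ((T : ZMod p)) (k * ↑T⁻¹), Units.inv_mul_cancel_right]
    have e1 : μ (k * ↑T⁻¹) * μ 0 * (μ (k * ↑T⁻¹))⁻¹ = μ k := by
      rw [hμμ (k * ↑T⁻¹) 0, show 2 * (k * ↑T⁻¹) - 0 = 2 * (k * ↑T⁻¹) by ring, h2m]
    have e2 : μ (k * ↑T⁻¹) * ν 0 * (μ (k * ↑T⁻¹))⁻¹ = ν k := by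
      rw [hμν (k * ↑T⁻¹) 0, show 2 * (k * ↑T⁻¹) - 0 = 2 * (k * ↑T⁻¹) by ring, h2m]
    calc μ k * ν k
        = (μ (k * ↑T⁻¹) * μ 0 * (μ (k * ↑T⁻¹))⁻¹) * (μ (k * ↑T⁻¹) * ν 0 * (μ (k * ↑T⁻¹))⁻¹) := by
          rw [e1, e2]
      _ = μ (k * ↑T⁻¹) * (μ 0 * ν 0) * (μ (k * ↑T⁻¹))⁻¹ := by group
      _ = (μ 0 * ν 0) * μ (k * ↑T⁻¹) * (μ (k * ↑T⁻¹))⁻¹ := by rw [hCμ (k * ↑T⁻¹)]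
      _ = μ 0 * ν 0 := by group
  have hν2 : ∀ l : ZMod p, ν l = (μ l)⁻¹ * (μ 0 * ν 0) := by
    intro l
    rw [← hC l]; group
  -- the q function
  set q : ZMod p → G := fun i => μ i * (μ 0)⁻¹ with hq
  have hμq : ∀ x, μ x = q x * μ 0 := by intro x; simp only [hq]; group
  have h0 : q 0 = 1 := by simp only [hq]; group
  have h1e : ∀ x, μ 0 * q x = q (-x) * μ 0 := by
    intro x
    have h := hμμ 0 x
    rw [show 2 * (0:ZMod p) - x = -x by ring] at h
    simp only [hq]
    rw [← h]; group
  have hT : ∀ i j : ZMod p, q i * q j = q (2 * i + j) * q (-i) := by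
    intro i j
    have h := hμμ' i (-j)
    rw [show 2 * i - -j = 2 * i + j by ring] at h
    rw [hμq i, hμq (-j), hμq (2*i+j)] at h
    -- h : q i * μ 0 * (q (-j) * μ 0) = q (2i+j) * μ 0 * (q i * μ 0)
    have h1 : q i * (μ 0 * q (-j)) * μ 0 = q (2*i+j) * (μ 0 * q i) * μ 0 := by
      calc q i * (μ 0 * q (-j)) * μ 0 = q i * μ 0 * (q (-j) * μ 0) := by group
        _ = q (2*i+j) * μ 0 * (q i * μ 0) := h
        _ = q (2*i+j) * (μ 0 * q i) * μ 0 := by group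
    rw [h1e (-j), h1e i, neg_neg] at h1
    have h2 : q i * q j * (μ 0 * μ 0) = q (2*i+j) * q (-i) * (μ 0 * μ 0) := by
      calc q i * q j * (μ 0 * μ 0) = q i * (q j * μ 0) * μ 0 := by group
        _ = q (2*i+j) * (q (-i) * μ 0) * μ 0 := h1
        _ = q (2*i+j) * q (-i) * (μ 0 * μ 0) := by group
    exact mul_right_cancel h2
  have hom : ∀ a b : ZMod p, q (a + b) = q a * q b :=
    q_hom (exists_unit_unit_add hodd) q h0 hT
  have hqinv : ∀ x, (q x)⁻¹ = q (-x) := by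
    intro x
    have h := hom x (-x)
    rw [show x + -x = (0:ZMod p) by ring, h0] at h
    exact inv_eq_of_mul_eq_one_right h.symm
  -- key closed forms
  have key1 : ∀ x y : ZMod p, μ x * μ y = q (x - y) * (μ 0 * μ 0) := by
    intro x y
    rw [hμq x, hμq y]
    calc q x * μ 0 * (q y * μ 0) = q x * (μ 0 * q y) * μ 0 := by group
      _ = q x * (q (-y) * μ 0) * μ 0 := by rw [h1e]
      _ = (q x * q (-y)) * (μ 0 * μ 0) := by group
      _ = q (x + -y) * (μ 0 * μ 0) := by rw [hom]
      _ = q (x - y) * (μ 0 * μ 0) := by rw [show x + -y = x - y by ring]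
  have key2 : ∀ x y : ZMod p, μ x * ν y = q (x - y) * (μ 0 * ν 0) := by
    intro x y
    rw [hν2 y, hμq x, hμq y]
    calc q x * μ 0 * ((q y * μ 0)⁻¹ * (μ 0 * ν 0))
        = (q x * (q y)⁻¹) * (μ 0 * ν 0) := by group
      _ = (q x * q (-y)) * (μ 0 * ν 0) := by rw [hqinv]
      _ = q (x + -y) * (μ 0 * ν 0) := by rw [hom]
      _ = q (x - y) * (μ 0 * ν 0) := by rw [show x + -y = x - y by ring]
  have key3 : ∀ x y : ZMod p, ν x * μ y = q (x - y) * (μ 0 * ν 0) := by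
    intro x y
    rw [hν2 x]
    have hinner : (μ x)⁻¹ * μ y = q (x - y) := by
      have s3 : μ 0 * q (x - y) = q (-x + y) * μ 0 := by
        have h := h1e (x - y)
        rwa [show -(x - y) = -x + y by ring] at h
      have s2 : q (-x) * q y = q (-x + y) := (hom _ _).symm
      rw [hμq x, hμq y]
      calc (q x * μ 0)⁻¹ * (q y * μ 0)
          = (μ 0)⁻¹ * ((q x)⁻¹ * q y) * μ 0 := by group
        _ = (μ 0)⁻¹ * (q (-x) * q y) * μ 0 := by rw [hqinv]
        _ = (μ 0)⁻¹ * q (-x + y) * μ 0 := by rw [s2]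
        _ = (μ 0)⁻¹ * (q (-x + y) * μ 0) := by group
        _ = (μ 0)⁻¹ * (μ 0 * q (x - y)) := by rw [← s3]
        _ = q (x - y) := by group
    calc (μ x)⁻¹ * (μ 0 * ν 0) * μ y
        = (μ x)⁻¹ * ((μ 0 * ν 0) * μ y) := by group
      _ = (μ x)⁻¹ * (μ y * (μ 0 * ν 0)) := by rw [← hCμ y]
      _ = ((μ x)⁻¹ * μ y) * (μ 0 * ν 0) := by group
      _ = q (x - y) * (μ 0 * ν 0) := by rw [hinner]
  intro k l r
  refine ⟨?_, ?_, ?_⟩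
  · rw [key1 k l, key1 (k+r) (l+r), show k + r - (l + r) = k - l by ring]
  · rw [key2 k l, key2 (k+r) (l+r), show k + r - (l + r) = k - l by ring]
  · rw [key2 k l, key3 (k+r) (l+r), show k + r - (l + r) = k - l by ring]
end

section
/- Let p be odd, (μ,ν) of type D_p^{(2)} in a group G, and g∞ ∈ G with g∞ μ_0 g∞⁻¹ = ν_0. Define g_i = μ_{i/2} and f_i = ν_{i/2} g∞ (division by 2 in ℤ/p). Then for all i, j ∈ ℤ/p: (a) g_{2i−j}⁻¹ μ_i g_j = μ_0 and f_{2i−j}⁻¹ ν_i f_j = μ_0; (b) f_{2i−j}⁻¹ μ_i f_j = g∞⁻¹ μ_0 g∞; (c) g_{2i−j}⁻¹ ν_i g_j = ν_0. -/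
/-- Let `p` be odd, `(μ, ν)` of type `D_p^{(2)}` in a group `G`,
and `g∞ ∈ G` with `g∞ μ_0 g∞⁻¹ = ν_0`.  With `g_i = μ_{i/2}` and
`f_i = ν_{i/2} g∞` (division by `2` in `ℤ/p`), for all `i j`:
(a) `g_{2i−j}⁻¹ μ_i g_j = μ_0` and `f_{2i−j}⁻¹ ν_i f_j = μ_0`;
(b) `f_{2i−j}⁻¹ μ_i f_j = g∞⁻¹ μ_0 g∞`;
(c) `g_{2i−j}⁻¹ ν_i g_j = ν_0`. -/
theorem stmt6 {G : Type*} [Group G] {p : ℕ} (hp : 1 ≤ p) (hodd : Odd p)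
    (μ ν : ZMod p → G) (ginf : G)
    (hμμ : ∀ i j : ZMod p, μ i * μ j * (μ i)⁻¹ = μ (2 * i - j))
    (hνν : ∀ i j : ZMod p, ν i * ν j * (ν i)⁻¹ = ν (2 * i - j))
    (hμν : ∀ i j : ZMod p, μ i * ν j * (μ i)⁻¹ = ν (2 * i - j))
    (hνμ : ∀ i j : ZMod p, ν i * μ j * (ν i)⁻¹ = μ (2 * i - j))
    (hginf : ginf * μ 0 * ginf⁻¹ = ν 0)
    (g f : ZMod p → G)
    (hg : ∀ i : ZMod p, g i = μ ((2 : ZMod p)⁻¹ * i))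
    (hf : ∀ i : ZMod p, f i = ν ((2 : ZMod p)⁻¹ * i) * ginf) :
    ∀ i j : ZMod p,
      (g (2 * i - j))⁻¹ * μ i * g j = μ 0 ∧
      (f (2 * i - j))⁻¹ * ν i * f j = μ 0 ∧
      (f (2 * i - j))⁻¹ * μ i * f j = ginf⁻¹ * μ 0 * ginf ∧
      (g (2 * i - j))⁻¹ * ν i * g j = ν 0 := by
  haveI : NeZero p := ⟨by omega⟩
  have hunit : IsUnit (2 : ZMod p) := by
    have hcop : Nat.Coprime 2 p := Nat.coprime_two_left.mpr hodd
    simpa using (ZMod.isUnit_iff_coprime 2 p).mpr hcop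
  have h2c : (2 : ZMod p) * (2 : ZMod p)⁻¹ = 1 := ZMod.mul_inv_of_unit _ hunit
  -- squares commute with everything generated by μ
  have hQ : ∀ k j : ZMod p, μ k * μ k * μ j = μ j * (μ k * μ k) := by
    intro k j
    have h1 := hμμ k j
    have h2 := hμμ k (2 * k - j)
    rw [show 2 * k - (2 * k - j) = j by ring] at h2
    rw [← h1] at h2
    calc μ k * μ k * μ j
        = μ k * (μ k * μ j * (μ k)⁻¹) * (μ k)⁻¹ * (μ k * μ k) := by group
      _ = μ j * (μ k * μ k) := by rw [h2]
  -- every μ x is a conjugate of μ 0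
  have hconj : ∀ x : ZMod p,
      μ ((2 : ZMod p)⁻¹ * x) * μ 0 * (μ ((2 : ZMod p)⁻¹ * x))⁻¹ = μ x := by
    intro x
    have h := hμμ ((2 : ZMod p)⁻¹ * x) 0
    rwa [show 2 * ((2 : ZMod p)⁻¹ * x) - 0 = x by linear_combination x * h2c] at h
  -- all squares are equal
  have hSQ : ∀ x : ZMod p, μ x * μ x = μ 0 * μ 0 := by
    intro x
    calc μ x * μ x
        = (μ ((2 : ZMod p)⁻¹ * x) * μ 0 * (μ ((2 : ZMod p)⁻¹ * x))⁻¹) *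
          (μ ((2 : ZMod p)⁻¹ * x) * μ 0 * (μ ((2 : ZMod p)⁻¹ * x))⁻¹) := by
          rw [hconj]
      _ = μ ((2 : ZMod p)⁻¹ * x) * (μ 0 * μ 0) * (μ ((2 : ZMod p)⁻¹ * x))⁻¹ := by
          group
      _ = μ 0 * μ 0 * μ ((2 : ZMod p)⁻¹ * x) * (μ ((2 : ZMod p)⁻¹ * x))⁻¹ := by
          rw [← hQ 0 ((2 : ZMod p)⁻¹ * x)]
      _ = μ 0 * μ 0 := by group
  have hinval : ∀ y : ZMod p, (μ y)⁻¹ = μ y * (μ 0 * μ 0)⁻¹ := by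
    intro y
    have h1 : μ y * (μ y * (μ 0 * μ 0)⁻¹) = 1 := by
      rw [← mul_assoc, hSQ y]; group
    exact inv_eq_of_mul_eq_one_right h1 ▸ rfl
  -- step by one
  have hstep1 : ∀ x : ZMod p, μ x * μ (x - 1) = μ (x + 1) * μ x := by
    intro x
    have h := hμμ x (x - 1)
    rw [show 2 * x - (x - 1) = x + 1 by ring] at h
    calc μ x * μ (x - 1) = (μ x * μ (x - 1) * (μ x)⁻¹) * μ x := by group
      _ = μ (x + 1) * μ x := by rw [h]
  have hF1n : ∀ (n : ℕ) (x : ZMod p),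
      μ (x + (n : ZMod p)) * μ (x + (n : ZMod p) - 1) = μ x * μ (x - 1) := by
    intro n
    induction n with
    | zero => intro x; norm_num
    | succ n ih =>
      intro x
      have e : x + ((n + 1 : ℕ) : ZMod p) = (x + (n : ZMod p)) + 1 := by
        push_cast; ring
      rw [e, show x + (n : ZMod p) + 1 - 1 = x + (n : ZMod p) by ring,
        ← hstep1 (x + (n : ZMod p))]
      exact ih x
  have hF1 : ∀ x : ZMod p, μ x * μ (x - 1) = μ 1 * μ 0 := by
    intro x
    have hv : (((x - 1).val : ℕ) : ZMod p) = x - 1 := ZMod.natCast_rightInverse _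
    have h := hF1n (x - 1).val 1
    rw [hv, show (1 : ZMod p) + (x - 1) = x by ring,
      show (1 : ZMod p) - 1 = 0 by ring] at h
    exact h
  -- main product formula, by induction
  have hFn : ∀ (n : ℕ) (x : ZMod p),
      μ x * μ (x - (n : ZMod p)) = μ (n : ZMod p) * μ 0 := by
    intro n
    induction n with
    | zero => intro x; simpa using hSQ x
    | succ n ih =>
      have key : ∀ y : ZMod p,
          μ y * μ (y - ((n : ZMod p) + 1)) =
            μ (n : ZMod p) * μ 0 * (μ 0 * μ 0)⁻¹ * (μ 1 * μ 0) := by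
        intro y
        have hc : μ (y - (n : ZMod p)) * (μ 0 * μ 0)⁻¹ =
            (μ 0 * μ 0)⁻¹ * μ (y - (n : ZMod p)) := by
          have hcomm : Commute (μ 0 * μ 0) (μ (y - (n : ZMod p))) :=
            hQ 0 (y - (n : ZMod p))
          exact (hcomm.inv_left.eq).symm
        calc μ y * μ (y - ((n : ZMod p) + 1))
            = (μ y * μ (y - (n : ZMod p))) *
              ((μ (y - (n : ZMod p)))⁻¹ * μ (y - (n : ZMod p) - 1)) := by
              rw [show y - ((n : ZMod p) + 1) = y - (n : ZMod p) - 1 by ring]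
              group
          _ = (μ y * μ (y - (n : ZMod p))) *
              (μ (y - (n : ZMod p)) * (μ 0 * μ 0)⁻¹ * μ (y - (n : ZMod p) - 1)) := by
              rw [← hinval]
          _ = (μ y * μ (y - (n : ZMod p))) *
              ((μ 0 * μ 0)⁻¹ * μ (y - (n : ZMod p)) * μ (y - (n : ZMod p) - 1)) := by
              rw [hc]
          _ = (μ (n : ZMod p) * μ 0) *
              ((μ 0 * μ 0)⁻¹ * (μ (y - (n : ZMod p)) * μ (y - (n : ZMod p) - 1))) := by
              rw [ih y]; group
          _ = (μ (n : ZMod p) * μ 0) * ((μ 0 * μ 0)⁻¹ * (μ 1 * μ 0)) := by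
              rw [hF1 (y - (n : ZMod p))]
          _ = μ (n : ZMod p) * μ 0 * (μ 0 * μ 0)⁻¹ * (μ 1 * μ 0) := by group
      intro x
      have h2 := key ((n : ZMod p) + 1)
      rw [show ((n : ZMod p) + 1) - ((n : ZMod p) + 1) = 0 by ring] at h2
      rw [show ((n + 1 : ℕ) : ZMod p) = (n : ZMod p) + 1 by push_cast; ring,
        key x, ← h2]
  have hC : ∀ x y : ZMod p, μ x * μ y = μ (x - y) * μ 0 := by
    intro x y
    have hv : (((x - y).val : ℕ) : ZMod p) = x - y := ZMod.natCast_rightInverse _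
    have h := hFn (x - y).val x
    rw [hv, show x - (x - y) = y by ring] at h
    exact h
  -- z := μ0⁻¹ ν0 is "central" and ν x = μ x * z
  have hzcg : ∀ x y : ZMod p,
      ((μ x)⁻¹ * ν x) * μ y = μ y * ((μ x)⁻¹ * ν x) := by
    intro x y
    have h3 : ν x * μ y * (ν x)⁻¹ = μ x * μ y * (μ x)⁻¹ := by
      rw [hνμ x y, hμμ x y]
    calc (μ x)⁻¹ * ν x * μ y
        = (μ x)⁻¹ * (ν x * μ y * (ν x)⁻¹) * ν x := by group
      _ = (μ x)⁻¹ * (μ x * μ y * (μ x)⁻¹) * ν x := by rw [h3]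
      _ = μ y * ((μ x)⁻¹ * ν x) := by group
  have hν : ∀ x : ZMod p, ν x = μ x * ((μ 0)⁻¹ * ν 0) := by
    intro x
    have h1 := hμμ ((2 : ZMod p)⁻¹ * x) x
    have h2 := hμν ((2 : ZMod p)⁻¹ * x) x
    rw [show 2 * ((2 : ZMod p)⁻¹ * x) - x = 0 by linear_combination x * h2c] at h1 h2
    have h4 : (μ 0)⁻¹ * ν 0 =
        μ ((2 : ZMod p)⁻¹ * x) * ((μ x)⁻¹ * ν x) * (μ ((2 : ZMod p)⁻¹ * x))⁻¹ := by
      rw [← h1, ← h2]; group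
    have h5 : μ ((2 : ZMod p)⁻¹ * x) * ((μ x)⁻¹ * ν x) * (μ ((2 : ZMod p)⁻¹ * x))⁻¹ =
        (μ x)⁻¹ * ν x := by
      rw [← hzcg x ((2 : ZMod p)⁻¹ * x)]; group
    have h6 : (μ 0)⁻¹ * ν 0 = (μ x)⁻¹ * ν x := h4.trans h5
    calc ν x = μ x * ((μ x)⁻¹ * ν x) := by group
      _ = μ x * ((μ 0)⁻¹ * ν 0) := by rw [← h6]
  have hcz : ∀ y : ZMod p, Commute ((μ 0)⁻¹ * ν 0) (μ y) := fun y => hzcg 0 y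
  intro i j
  have hAB : i - (2 : ZMod p)⁻¹ * j = (2 : ZMod p)⁻¹ * (2 * i - j) := by
    linear_combination (-i) * h2c
  have hmain : μ i * μ ((2 : ZMod p)⁻¹ * j) =
      μ ((2 : ZMod p)⁻¹ * (2 * i - j)) * μ 0 := by
    rw [← hAB]; exact hC i ((2 : ZMod p)⁻¹ * j)
  have hνprod : (ν ((2 : ZMod p)⁻¹ * (2 * i - j)))⁻¹ * ν i * ν ((2 : ZMod p)⁻¹ * j)
      = ν 0 := by
    rw [hν ((2 : ZMod p)⁻¹ * (2 * i - j)), hν i, hν ((2 : ZMod p)⁻¹ * j)]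
    calc (μ ((2 : ZMod p)⁻¹ * (2 * i - j)) * ((μ 0)⁻¹ * ν 0))⁻¹ *
          (μ i * ((μ 0)⁻¹ * ν 0)) * (μ ((2 : ZMod p)⁻¹ * j) * ((μ 0)⁻¹ * ν 0))
        = ((μ 0)⁻¹ * ν 0)⁻¹ * (μ ((2 : ZMod p)⁻¹ * (2 * i - j)))⁻¹ * μ i *
          (((μ 0)⁻¹ * ν 0) * μ ((2 : ZMod p)⁻¹ * j)) * ((μ 0)⁻¹ * ν 0) := by group
      _ = ((μ 0)⁻¹ * ν 0)⁻¹ * (μ ((2 : ZMod p)⁻¹ * (2 * i - j)))⁻¹ * μ i *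
          (μ ((2 : ZMod p)⁻¹ * j) * ((μ 0)⁻¹ * ν 0)) * ((μ 0)⁻¹ * ν 0) := by
          rw [(hcz ((2 : ZMod p)⁻¹ * j)).eq]
      _ = ((μ 0)⁻¹ * ν 0)⁻¹ *
          ((μ ((2 : ZMod p)⁻¹ * (2 * i - j)))⁻¹ * (μ i * μ ((2 : ZMod p)⁻¹ * j))) *
          (((μ 0)⁻¹ * ν 0) * ((μ 0)⁻¹ * ν 0)) := by group
      _ = ((μ 0)⁻¹ * ν 0)⁻¹ *
          ((μ ((2 : ZMod p)⁻¹ * (2 * i - j)))⁻¹ *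
            (μ ((2 : ZMod p)⁻¹ * (2 * i - j)) * μ 0)) *
          (((μ 0)⁻¹ * ν 0) * ((μ 0)⁻¹ * ν 0)) := by rw [hmain]
      _ = ((μ 0)⁻¹ * ν 0)⁻¹ * (μ 0 * ((μ 0)⁻¹ * ν 0)) * ((μ 0)⁻¹ * ν 0) := by group
      _ = ((μ 0)⁻¹ * ν 0)⁻¹ * (((μ 0)⁻¹ * ν 0) * μ 0) * ((μ 0)⁻¹ * ν 0) := by
          rw [← (hcz 0).eq]
      _ = μ 0 * ((μ 0)⁻¹ * ν 0) := by group
      _ = ν 0 := by group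
  have hmix : (ν ((2 : ZMod p)⁻¹ * (2 * i - j)))⁻¹ * μ i * ν ((2 : ZMod p)⁻¹ * j)
      = μ 0 := by
    rw [hν ((2 : ZMod p)⁻¹ * (2 * i - j)), hν ((2 : ZMod p)⁻¹ * j)]
    calc (μ ((2 : ZMod p)⁻¹ * (2 * i - j)) * ((μ 0)⁻¹ * ν 0))⁻¹ * μ i *
          (μ ((2 : ZMod p)⁻¹ * j) * ((μ 0)⁻¹ * ν 0))
        = ((μ 0)⁻¹ * ν 0)⁻¹ *
          ((μ ((2 : ZMod p)⁻¹ * (2 * i - j)))⁻¹ * (μ i * μ ((2 : ZMod p)⁻¹ * j))) *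
          ((μ 0)⁻¹ * ν 0) := by group
      _ = ((μ 0)⁻¹ * ν 0)⁻¹ *
          ((μ ((2 : ZMod p)⁻¹ * (2 * i - j)))⁻¹ *
            (μ ((2 : ZMod p)⁻¹ * (2 * i - j)) * μ 0)) * ((μ 0)⁻¹ * ν 0) := by
          rw [hmain]
      _ = ((μ 0)⁻¹ * ν 0)⁻¹ * (μ 0 * ((μ 0)⁻¹ * ν 0)) := by group
      _ = ((μ 0)⁻¹ * ν 0)⁻¹ * (((μ 0)⁻¹ * ν 0) * μ 0) := by rw [← (hcz 0).eq]
      _ = μ 0 := by group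
  refine ⟨?_, ?_, ?_, ?_⟩
  · rw [hg, hg]
    calc (μ ((2 : ZMod p)⁻¹ * (2 * i - j)))⁻¹ * μ i * μ ((2 : ZMod p)⁻¹ * j)
        = (μ ((2 : ZMod p)⁻¹ * (2 * i - j)))⁻¹ * (μ i * μ ((2 : ZMod p)⁻¹ * j)) := by
          group
      _ = (μ ((2 : ZMod p)⁻¹ * (2 * i - j)))⁻¹ *
          (μ ((2 : ZMod p)⁻¹ * (2 * i - j)) * μ 0) := by rw [hmain]
      _ = μ 0 := by group
  · rw [hf, hf]
    calc (ν ((2 : ZMod p)⁻¹ * (2 * i - j)) * ginf)⁻¹ * ν i *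
          (ν ((2 : ZMod p)⁻¹ * j) * ginf)
        = ginf⁻¹ * ((ν ((2 : ZMod p)⁻¹ * (2 * i - j)))⁻¹ * ν i *
            ν ((2 : ZMod p)⁻¹ * j)) * ginf := by group
      _ = ginf⁻¹ * ν 0 * ginf := by rw [hνprod]
      _ = μ 0 := by rw [← hginf]; group
  · rw [hf, hf]
    calc (ν ((2 : ZMod p)⁻¹ * (2 * i - j)) * ginf)⁻¹ * μ i *
          (ν ((2 : ZMod p)⁻¹ * j) * ginf)
        = ginf⁻¹ * ((ν ((2 : ZMod p)⁻¹ * (2 * i - j)))⁻¹ * μ i *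
            ν ((2 : ZMod p)⁻¹ * j)) * ginf := by group
      _ = ginf⁻¹ * μ 0 * ginf := by rw [hmix]
  · rw [hg, hg, hν i]
    calc (μ ((2 : ZMod p)⁻¹ * (2 * i - j)))⁻¹ * (μ i * ((μ 0)⁻¹ * ν 0)) *
          μ ((2 : ZMod p)⁻¹ * j)
        = (μ ((2 : ZMod p)⁻¹ * (2 * i - j)))⁻¹ * μ i *
          (((μ 0)⁻¹ * ν 0) * μ ((2 : ZMod p)⁻¹ * j)) := by group
      _ = (μ ((2 : ZMod p)⁻¹ * (2 * i - j)))⁻¹ * μ i *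
          (μ ((2 : ZMod p)⁻¹ * j) * ((μ 0)⁻¹ * ν 0)) := by
          rw [(hcz ((2 : ZMod p)⁻¹ * j)).eq]
      _ = ((μ ((2 : ZMod p)⁻¹ * (2 * i - j)))⁻¹ * (μ i * μ ((2 : ZMod p)⁻¹ * j))) *
          ((μ 0)⁻¹ * ν 0) := by group
      _ = ((μ ((2 : ZMod p)⁻¹ * (2 * i - j)))⁻¹ *
            (μ ((2 : ZMod p)⁻¹ * (2 * i - j)) * μ 0)) * ((μ 0)⁻¹ * ν 0) := by
          rw [hmain]
      _ = μ 0 * ((μ 0)⁻¹ * ν 0) := by group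
      _ = ν 0 := by group
end

section
/- Let (σ_i)_{1≤i≤3} and (τ_j)_{1≤j≤3} be triples in a group G each of type D₃ (conjugation of any two distinct members gives the third). If additionally σ₁ τ₁ σ₁⁻¹ = τ₁, σ₁ τ₂ σ₁⁻¹ = τ₃, and σ₂ τ₁ σ₂⁻¹ = τ₃, then σ_i τ_i σ_i⁻¹ = τ_i for i = 1,2,3, and σ_i τ_j σ_i⁻¹ = τ_k for all distinct i, j, k. -/
/-- A triple of (distinct) group elements of type `D₃`. -/
def IsD3 {G : Type*} [Group G] (a b c : G) : Prop :=
  (a ≠ b ∧ a ≠ c ∧ b ≠ c) ∧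
  (a * b * a⁻¹ = c ∧ a * c * a⁻¹ = b ∧ b * a * b⁻¹ = c ∧
   b * c * b⁻¹ = a ∧ c * a * c⁻¹ = b ∧ c * b * c⁻¹ = a)

/-- If `(σ₁,σ₂,σ₃)` and `(τ₁,τ₂,τ₃)` are triples of type `D₃` and
`σ₁ τ₁ σ₁⁻¹ = τ₁`, `σ₁ τ₂ σ₁⁻¹ = τ₃`, `σ₂ τ₁ σ₂⁻¹ = τ₃`, then
`σ_i τ_i σ_i⁻¹ = τ_i` for `i = 1,2,3` and `σ_i τ_j σ_i⁻¹ = τ_k` for all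
distinct `i, j, k`. -/
theorem stmt9 {G : Type*} [Group G] (σ₁ σ₂ σ₃ τ₁ τ₂ τ₃ : G)
    (hσ : IsD3 σ₁ σ₂ σ₃) (hτ : IsD3 τ₁ τ₂ τ₃)
    (h11 : σ₁ * τ₁ * σ₁⁻¹ = τ₁)
    (h12 : σ₁ * τ₂ * σ₁⁻¹ = τ₃)
    (h21 : σ₂ * τ₁ * σ₂⁻¹ = τ₃) :
    (σ₁ * τ₁ * σ₁⁻¹ = τ₁ ∧ σ₂ * τ₂ * σ₂⁻¹ = τ₂ ∧ σ₃ * τ₃ * σ₃⁻¹ = τ₃) ∧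
    (σ₁ * τ₂ * σ₁⁻¹ = τ₃ ∧ σ₁ * τ₃ * σ₁⁻¹ = τ₂ ∧
     σ₂ * τ₁ * σ₂⁻¹ = τ₃ ∧ σ₂ * τ₃ * σ₂⁻¹ = τ₁ ∧
     σ₃ * τ₁ * σ₃⁻¹ = τ₂ ∧ σ₃ * τ₂ * σ₃⁻¹ = τ₁) := by
  obtain ⟨-, hσ12, hσ13, hσ21, hσ23, hσ31, hσ32⟩ := hσ
  obtain ⟨-, hτ12, hτ13, hτ21, hτ23, hτ31, hτ32⟩ := hτ
  set c : G := σ₁ * σ₂ with hc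
  -- σ₁ swaps τ₂ and τ₃
  have h13 : σ₁ * τ₃ * σ₁⁻¹ = τ₂ := by
    have : σ₁ * τ₃ * σ₁⁻¹ = (σ₁ * τ₁ * σ₁⁻¹) * (σ₁ * τ₂ * σ₁⁻¹) * (σ₁ * τ₁ * σ₁⁻¹)⁻¹ := by
      rw [← hτ12]; group
    rw [this, h11, h12, hτ13]
  -- c conjugates σ₁ to σ₂ and σ₂ to σ₃
  have hcσ1 : c * σ₁ * c⁻¹ = σ₂ := by
    have : c * σ₁ * c⁻¹ = σ₁ * (σ₂ * σ₁ * σ₂⁻¹) * σ₁⁻¹ := by rw [hc]; group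
    rw [this, hσ21, hσ13]
  have hcσ2 : c * σ₂ * c⁻¹ = σ₃ := by
    have : c * σ₂ * c⁻¹ = σ₁ * σ₂ * σ₁⁻¹ := by rw [hc]; group
    rw [this, hσ12]
  -- c sends τ₁ to τ₂
  have hc1 : c * τ₁ * c⁻¹ = τ₂ := by
    have : c * τ₁ * c⁻¹ = σ₁ * (σ₂ * τ₁ * σ₂⁻¹) * σ₁⁻¹ := by rw [hc]; group
    rw [this, h21, h13]
  have hc1' : c⁻¹ * τ₂ * c = τ₁ := by rw [← hc1]; group
  -- σ₂ fixes τ₂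
  have h22 : σ₂ * τ₂ * σ₂⁻¹ = τ₂ := by
    have : σ₂ * τ₂ * σ₂⁻¹ = c * (σ₁ * (c⁻¹ * τ₂ * c) * σ₁⁻¹) * c⁻¹ := by
      rw [← hcσ1]; group
    rw [this, hc1', h11, hc1]
  -- σ₂ sends τ₃ to τ₁
  have h23 : σ₂ * τ₃ * σ₂⁻¹ = τ₁ := by
    have : σ₂ * τ₃ * σ₂⁻¹ = (σ₂ * τ₁ * σ₂⁻¹) * (σ₂ * τ₂ * σ₂⁻¹) * (σ₂ * τ₁ * σ₂⁻¹)⁻¹ := by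
      rw [← hτ12]; group
    rw [this, h21, h22, hτ32]
  -- c sends τ₂ to τ₃ and τ₃ to τ₁
  have hc2 : c * τ₂ * c⁻¹ = τ₃ := by
    have : c * τ₂ * c⁻¹ = σ₁ * (σ₂ * τ₂ * σ₂⁻¹) * σ₁⁻¹ := by rw [hc]; group
    rw [this, h22, h12]
  have hc2' : c⁻¹ * τ₃ * c = τ₂ := by rw [← hc2]; group
  have hc3 : c * τ₃ * c⁻¹ = τ₁ := by
    have : c * τ₃ * c⁻¹ = σ₁ * (σ₂ * τ₃ * σ₂⁻¹) * σ₁⁻¹ := by rw [hc]; group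
    rw [this, h23, h11]
  have hc3' : c⁻¹ * τ₁ * c = τ₃ := by rw [← hc3]; group
  -- σ₃ facts, via σ₃ = c σ₂ c⁻¹
  have h33 : σ₃ * τ₃ * σ₃⁻¹ = τ₃ := by
    have : σ₃ * τ₃ * σ₃⁻¹ = c * (σ₂ * (c⁻¹ * τ₃ * c) * σ₂⁻¹) * c⁻¹ := by
      rw [← hcσ2]; group
    rw [this, hc2', h22, hc2]
  have h31 : σ₃ * τ₁ * σ₃⁻¹ = τ₂ := by
    have : σ₃ * τ₁ * σ₃⁻¹ = c * (σ₂ * (c⁻¹ * τ₁ * c) * σ₂⁻¹) * c⁻¹ := by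
      rw [← hcσ2]; group
    rw [this, hc3', h23, hc1]
  have h32 : σ₃ * τ₂ * σ₃⁻¹ = τ₁ := by
    have : σ₃ * τ₂ * σ₃⁻¹ = c * (σ₂ * (c⁻¹ * τ₂ * c) * σ₂⁻¹) * c⁻¹ := by
      rw [← hcσ2]; group
    rw [this, hc1', h21, hc3]
  exact ⟨⟨h11, h22, h33⟩, h12, h13, h21, h23, h31, h32⟩
end

section
/- Let σ₁,σ₂,σ₃,τ₁,τ₂,τ₃ ∈ G, all distinct, with both triples of type D₃. If σ₁ τ₁ σ₁⁻¹ = τ₁, σ₂ τ₁ σ₂⁻¹ = τ₃, and τ₁ σ₂ τ₁⁻¹ = σ₃ hold, then (σ,τ) is of type D₃^{(2)}: σ_i τ_j σ_i⁻¹ = τ_k and τ_i σ_j τ_i⁻¹ = σ_k whenever i, j, k are all equal or all distinct. -/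
/-- Six distinct group elements forming a family of type `D₃^{(2)}`: both
triples are of type `D₃`, and `σ_i ▷ τ_j = τ_k`, `τ_i ▷ σ_j = σ_k` whenever
`i, j, k` are all equal or all distinct. -/
def IsD32 {G : Type*} [Group G] (s₁ s₂ s₃ t₁ t₂ t₃ : G) : Prop :=
  IsD3 s₁ s₂ s₃ ∧ IsD3 t₁ t₂ t₃ ∧
  (s₁ ≠ t₁ ∧ s₁ ≠ t₂ ∧ s₁ ≠ t₃ ∧ s₂ ≠ t₁ ∧ s₂ ≠ t₂ ∧ s₂ ≠ t₃ ∧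
   s₃ ≠ t₁ ∧ s₃ ≠ t₂ ∧ s₃ ≠ t₃) ∧
  (s₁ * t₁ * s₁⁻¹ = t₁ ∧ s₂ * t₂ * s₂⁻¹ = t₂ ∧ s₃ * t₃ * s₃⁻¹ = t₃ ∧
   s₁ * t₂ * s₁⁻¹ = t₃ ∧ s₁ * t₃ * s₁⁻¹ = t₂ ∧
   s₂ * t₁ * s₂⁻¹ = t₃ ∧ s₂ * t₃ * s₂⁻¹ = t₁ ∧
   s₃ * t₁ * s₃⁻¹ = t₂ ∧ s₃ * t₂ * s₃⁻¹ = t₁) ∧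
  (t₁ * s₁ * t₁⁻¹ = s₁ ∧ t₂ * s₂ * t₂⁻¹ = s₂ ∧ t₃ * s₃ * t₃⁻¹ = s₃ ∧
   t₁ * s₂ * t₁⁻¹ = s₃ ∧ t₁ * s₃ * t₁⁻¹ = s₂ ∧
   t₂ * s₁ * t₂⁻¹ = s₃ ∧ t₂ * s₃ * t₂⁻¹ = s₁ ∧
   t₃ * s₁ * t₃⁻¹ = s₂ ∧ t₃ * s₂ * t₃⁻¹ = s₁)

/-- If `σ₁,σ₂,σ₃,τ₁,τ₂,τ₃` are all distinct, both triples are of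
type `D₃`, and `σ₁ τ₁ σ₁⁻¹ = τ₁`, `σ₂ τ₁ σ₂⁻¹ = τ₃`, `τ₁ σ₂ τ₁⁻¹ = σ₃` hold,
then `(σ, τ)` is of type `D₃^{(2)}`. -/
theorem stmt10 {G : Type*} [Group G] (σ₁ σ₂ σ₃ τ₁ τ₂ τ₃ : G)
    (hσ : IsD3 σ₁ σ₂ σ₃) (hτ : IsD3 τ₁ τ₂ τ₃)
    (hd : σ₁ ≠ τ₁ ∧ σ₁ ≠ τ₂ ∧ σ₁ ≠ τ₃ ∧ σ₂ ≠ τ₁ ∧ σ₂ ≠ τ₂ ∧ σ₂ ≠ τ₃ ∧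
          σ₃ ≠ τ₁ ∧ σ₃ ≠ τ₂ ∧ σ₃ ≠ τ₃)
    (h1 : σ₁ * τ₁ * σ₁⁻¹ = τ₁)
    (h2 : σ₂ * τ₁ * σ₂⁻¹ = τ₃)
    (h3 : τ₁ * σ₂ * τ₁⁻¹ = σ₃) :
    IsD32 σ₁ σ₂ σ₃ τ₁ τ₂ τ₃ := by
  obtain ⟨_, hs1, hs2, hs3, hs4, hs5, hs6⟩ := id hσ
  obtain ⟨_, ht1, ht2, ht3, ht4, ht5, ht6⟩ := id hτ
  have key : ∀ x y z : G, x * (y * z * y⁻¹) * x⁻¹ =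
      (x * y * x⁻¹) * (x * z * x⁻¹) * (x * y * x⁻¹)⁻¹ := fun x y z => by group
  have sq : ∀ x : G, x * x * x⁻¹ = x := fun x => by group
  -- σ₃ ▷ τ₃ = τ₃
  have e33 : σ₃ * τ₃ * σ₃⁻¹ = τ₃ := by
    have h := key σ₂ σ₁ τ₁; rw [h1, h2, hs3] at h; exact h.symm
  -- σ₃ ▷ τ₁ = τ₂
  have e31 : σ₃ * τ₁ * σ₃⁻¹ = τ₂ := by
    have h := key τ₁ σ₂ τ₁; rw [h2, h3, sq, ht2] at h; exact h.symm
  -- σ₁ ▷ τ₃ = τ₂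
  have e13 : σ₁ * τ₃ * σ₁⁻¹ = τ₂ := by
    have h := key σ₁ σ₂ τ₁; rw [h2, hs1, h1, e31] at h; exact h
  -- σ₁ ▷ τ₂ = τ₃
  have e12 : σ₁ * τ₂ * σ₁⁻¹ = τ₃ := by
    have h := key σ₁ σ₃ τ₁; rw [e31, hs2, h1, h2] at h; exact h
  -- σ₂ ▷ τ₂ = τ₂
  have e22 : σ₂ * τ₂ * σ₂⁻¹ = τ₂ := by
    have h := key σ₂ σ₃ τ₁; rw [e31, hs4, h2, e13] at h; exact h
  -- σ₃ ▷ τ₂ = τ₁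
  have e32 : σ₃ * τ₂ * σ₃⁻¹ = τ₁ := by
    have h := key σ₃ τ₁ τ₃; rw [ht2, e31, e33, ht4] at h; exact h
  -- σ₂ ▷ τ₃ = τ₁
  have e23 : σ₂ * τ₃ * σ₂⁻¹ = τ₁ := by
    have h := key σ₂ σ₁ τ₂; rw [e12, hs3, e22, e32] at h; exact h
  -- τ₁ ▷ σ₁ = σ₁ (σ₁ and τ₁ commute)
  have c11 : σ₁ * τ₁ = τ₁ * σ₁ := mul_inv_eq_iff_eq_mul.mp h1
  have f11 : τ₁ * σ₁ * τ₁⁻¹ = σ₁ := by rw [← c11]; group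
  -- τ₁ ▷ σ₃ = σ₂
  have f13 : τ₁ * σ₃ * τ₁⁻¹ = σ₂ := by
    have h := key τ₁ σ₂ σ₁; rw [hs3, h3, f11, hs5] at h; exact h
  -- τ₂ ▷ σ₁ = σ₃
  have f21 : τ₂ * σ₁ * τ₂⁻¹ = σ₃ := by
    have h := key σ₃ τ₁ σ₂; rw [h3, e31, hs6, sq] at h; exact h.symm
  -- τ₂ ▷ σ₂ = σ₂
  have f22 : τ₂ * σ₂ * τ₂⁻¹ = σ₂ := by
    have h := key σ₃ τ₁ σ₁; rw [f11, e31, hs5] at h; exact h.symm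
  -- τ₂ ▷ σ₃ = σ₁
  have f23 : τ₂ * σ₃ * τ₂⁻¹ = σ₁ := by
    have h := key σ₃ τ₁ σ₃; rw [f13, e31, sq, hs6] at h; exact h.symm
  -- τ₃ ▷ σ₂ = σ₁
  have f32 : τ₃ * σ₂ * τ₃⁻¹ = σ₁ := by
    have h := key σ₂ τ₁ σ₂; rw [h3, h2, sq, hs4] at h; exact h.symm
  -- τ₃ ▷ σ₃ = σ₃
  have f33 : τ₃ * σ₃ * τ₃⁻¹ = σ₃ := by
    have h := key σ₂ τ₁ σ₁; rw [f11, h2, hs3] at h; exact h.symm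
  -- τ₃ ▷ σ₁ = σ₂
  have f31 : τ₃ * σ₁ * τ₃⁻¹ = σ₂ := by
    have h := key σ₂ τ₁ σ₃; rw [f13, h2, hs4, sq] at h; exact h.symm
  exact ⟨hσ, hτ, hd,
    ⟨h1, e22, e33, e12, e13, h2, e23, e31, e32⟩,
    ⟨f11, f22, f33, h3, f13, f21, f23, f31, f32⟩⟩
end

section
/- Let p be an odd prime, m ≥ 2p, and σ ∈ S_m whose cycle decomposition contains a j-cycle α = (i₁ ⋯ i_j) with 2p | j and j ≠ 4. Let P = (i₂ i₄ ⋯ i_j) and κ = j/(2p). Define σ_i := P^{iκ} σ P^{−iκ} for i ∈ ℤ/p. Then the σ_i are p distinct conjugates of σ satisfying σ_i σ_l σ_i⁻¹ = σ_{2i−l} for all i, l ∈ ℤ/p (a family of type D_p), and moreover σ_t ≠ σ_l⁻¹ for all t, l, so (σ_i) ∪ (σ_i⁻¹) is a family of type D_p^{(2)} contained in the conjugacy class of σ. -/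
/-- Let `p` be an odd prime, `m ≥ 2p`, and `σ ∈ S_m` whose cycle
decomposition contains a `j`-cycle `α = (i₁ ⋯ i_j)` with `2p ∣ j`, `j ≠ 4`,
`j = 2pκ`.  Let `P = (i₂ i₄ ⋯ i_j)` be the cycle on the even-indexed entries
(entries encoded by an injective `x : ZMod j → Fin m`, `i_r = x r`).  With
`σ_i := P^{iκ} σ P^{−iκ}` for `i ∈ ℤ/p`, the `σ_i` are `p` distinct conjugates
of `σ` with `σ_i σ_l σ_i⁻¹ = σ_{2i−l}`, and `σ_t ≠ σ_l⁻¹` for all `t, l`, so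
that `(σ_i) ∪ (σ_i⁻¹)` is a family of type `D_p^{(2)}` contained in the
conjugacy class of `σ`. -/
theorem stmt13 {m p κ j : ℕ} (hp : p.Prime) (hodd : Odd p) (hm : 2 * p ≤ m)
    (hκ : 1 ≤ κ) (hj : j = 2 * p * κ) (hj4 : j ≠ 4)
    (σ α P : Equiv.Perm (Fin m))
    (x : ZMod j → Fin m) (hx : Function.Injective x)
    (hα : ∀ r : ZMod j, α (x r) = x (r + 1))
    (hα' : ∀ y : Fin m, (∀ r : ZMod j, y ≠ x r) → α y = y)
    (hcyc : α ∈ σ.cycleFactorsFinset)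
    (hP : ∀ r : ZMod j, Even r → P (x r) = x (r + 2))
    (hP' : ∀ r : ZMod j, Odd r → P (x r) = x r)
    (hP'' : ∀ y : Fin m, (∀ r : ZMod j, y ≠ x r) → P y = y)
    (σfam : ZMod p → Equiv.Perm (Fin m))
    (hfam : ∀ i : ZMod p, σfam i = P ^ (i.val * κ) * σ * (P ^ (i.val * κ))⁻¹) :
    Function.Injective σfam ∧
    (∀ i : ZMod p, IsConj σ (σfam i) ∧ IsConj σ (σfam i)⁻¹) ∧
    (∀ i l : ZMod p, σfam i * σfam l * (σfam i)⁻¹ = σfam (2 * i - l)) ∧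
    (∀ t l : ZMod p, σfam t ≠ (σfam l)⁻¹) ∧
    (∀ i l : ZMod p,
      σfam i * (σfam l)⁻¹ * (σfam i)⁻¹ = (σfam (2 * i - l))⁻¹ ∧
      (σfam i)⁻¹ * σfam l * σfam i = σfam (2 * i - l) ∧
      (σfam i)⁻¹ * (σfam l)⁻¹ * σfam i = (σfam (2 * i - l))⁻¹) := by
  classical
  have hp3 : 3 ≤ p := by
    rcases hodd with ⟨k, hk⟩
    have := hp.two_le
    omega
  have hj6 : 6 ≤ j := by
    rw [hj]; nlinarith
  haveI : NeZero j := ⟨by omega⟩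
  haveI : NeZero p := ⟨by omega⟩
  -- every element of `ZMod j` is even or odd
  have hcast : ∀ r : ZMod j, Even r ∨ Odd r := by
    intro r
    have hr : ((r.val : ℕ) : ZMod j) = r := ZMod.natCast_rightInverse r
    rcases Nat.even_or_odd r.val with ⟨t, ht⟩ | ⟨t, ht⟩
    · exact Or.inl ⟨(t : ZMod j), by rw [← hr, ht]; push_cast; ring⟩
    · exact Or.inr ⟨(t : ZMod j), by rw [← hr, ht]; push_cast; ring⟩
  have htri : ∀ y : Fin m, (∃ r : ZMod j, Even r ∧ y = x r) ∨
      (∃ r : ZMod j, Odd r ∧ y = x r) ∨ (∀ r : ZMod j, y ≠ x r) := by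
    intro y
    by_cases h : ∃ r, y = x r
    · obtain ⟨r, rfl⟩ := h
      rcases hcast r with hr | hr
      · exact Or.inl ⟨r, hr, rfl⟩
      · exact Or.inr (Or.inl ⟨r, hr, rfl⟩)
    · exact Or.inr (Or.inr fun r hy => h ⟨r, hy⟩)
  have hone : (1 : ZMod j) ≠ 0 := by
    intro h
    have h' : ((1 : ℕ) : ZMod j) = ((0 : ℕ) : ZMod j) := by push_cast; exact h
    rw [ZMod.natCast_eq_natCast_iff'] at h'
    rw [Nat.mod_eq_of_lt (by omega), Nat.zero_mod] at h'
    omega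
  -- σ acts like α on the entries
  have hσx : ∀ r : ZMod j, σ (x r) = x (r + 1) := by
    intro r
    obtain ⟨hc, hsup⟩ := Equiv.Perm.mem_cycleFactorsFinset_iff.mp hcyc
    have hmem : x r ∈ α.support := by
      rw [Equiv.Perm.mem_support, hα r]
      intro h
      have h2 := hx h
      exact hone (by linear_combination h2)
    rw [← hsup _ hmem, hα]
  have hσinv : ∀ r : ZMod j, σ⁻¹ (x r) = x (r - 1) := by
    intro r
    have h : r - 1 + 1 = r := by ring
    rw [Equiv.Perm.inv_eq_iff_eq, hσx, h]
  have hσout : ∀ y : Fin m, (∀ r : ZMod j, y ≠ x r) → ∀ r : ZMod j, σ y ≠ x r := by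
    intro y hy r h
    apply hy (r - 1)
    have h2 := congrArg (σ⁻¹ : Equiv.Perm (Fin m)) h
    simpa [hσinv] using h2
  have hσinvout : ∀ y : Fin m, (∀ r : ZMod j, y ≠ x r) → ∀ r : ZMod j, σ⁻¹ y ≠ x r := by
    intro y hy r h
    apply hy (r + 1)
    have h2 := congrArg (σ : Equiv.Perm (Fin m)) h
    simpa [hσx] using h2
  -- powers of P
  have hPn : ∀ (n : ℕ) (r : ZMod j), Even r → (P ^ n) (x r) = x (r + 2 * n) := by
    intro n
    induction n with
    | zero => intro r hr; simp
    | succ n ih =>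
      intro r hr
      have h2 : Even (r + 2) := by
        obtain ⟨t, ht⟩ := hr; exact ⟨t + 1, by rw [ht]; ring⟩
      rw [pow_succ, Equiv.Perm.mul_apply, hP r hr, ih _ h2]
      congr 1
      push_cast
      ring
  have hPnodd : ∀ (n : ℕ) (r : ZMod j), Odd r → (P ^ n) (x r) = x r := by
    intro n
    induction n with
    | zero => intro r hr; simp
    | succ n ih => intro r hr; rw [pow_succ, Equiv.Perm.mul_apply, hP' r hr, ih r hr]
  have hPnout : ∀ (n : ℕ) (y : Fin m), (∀ r : ZMod j, y ≠ x r) → (P ^ n) y = y := by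
    intro n
    induction n with
    | zero => intro y hy; simp
    | succ n ih => intro y hy; rw [pow_succ, Equiv.Perm.mul_apply, hP'' y hy, ih y hy]
  have hPninv : ∀ (n : ℕ) (s : ZMod j), Even s → (P ^ n)⁻¹ (x s) = x (s - 2 * n) := by
    intro n s hs
    have h2 : Even (s - 2 * n) := by
      obtain ⟨t, ht⟩ := hs; exact ⟨t - n, by rw [ht]; push_cast; ring⟩
    rw [Equiv.Perm.inv_eq_iff_eq, hPn n _ h2]
    congr 1
    ring
  have hPninvodd : ∀ (n : ℕ) (s : ZMod j), Odd s → (P ^ n)⁻¹ (x s) = x s := by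
    intro n s hs
    rw [Equiv.Perm.inv_eq_iff_eq, hPnodd n s hs]
  have hPninvout : ∀ (n : ℕ) (y : Fin m), (∀ r : ZMod j, y ≠ x r) → (P ^ n)⁻¹ y = y := by
    intro n y hy
    rw [Equiv.Perm.inv_eq_iff_eq, hPnout n y hy]
  -- action of the conjugates  f n := P^n σ P^{-n}
  have hfe : ∀ (n : ℕ) (r : ZMod j), Even r →
      (P ^ n * σ * (P ^ n)⁻¹) (x r) = x (r + 1 - 2 * n) := by
    intro n r hr
    have h1 : Odd (r - 2 * n + 1) := by
      obtain ⟨t, ht⟩ := hr; exact ⟨t - n, by rw [ht]; push_cast; ring⟩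
    simp only [Equiv.Perm.mul_apply]
    rw [hPninv n r hr, hσx, hPnodd n _ h1]
    congr 1
    ring
  have hfo : ∀ (n : ℕ) (r : ZMod j), Odd r →
      (P ^ n * σ * (P ^ n)⁻¹) (x r) = x (r + 1 + 2 * n) := by
    intro n r hr
    have h1 : Even (r + 1) := by
      obtain ⟨t, ht⟩ := hr; exact ⟨t + 1, by rw [ht]; ring⟩
    simp only [Equiv.Perm.mul_apply]
    rw [hPninvodd n r hr, hσx, hPn n _ h1]
  have hfout : ∀ (n : ℕ) (y : Fin m), (∀ r : ZMod j, y ≠ x r) →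
      (P ^ n * σ * (P ^ n)⁻¹) y = σ y := by
    intro n y hy
    simp only [Equiv.Perm.mul_apply]
    rw [hPninvout n y hy, hPnout n _ (hσout y hy)]
  have hinv_eq : ∀ n : ℕ, (P ^ n * σ * (P ^ n)⁻¹)⁻¹ = P ^ n * σ⁻¹ * (P ^ n)⁻¹ := by
    intro n; group
  have hge : ∀ (n : ℕ) (s : ZMod j), Even s →
      (P ^ n * σ * (P ^ n)⁻¹)⁻¹ (x s) = x (s - 1 - 2 * n) := by
    intro n s hs
    have h1 : Odd (s - 2 * n - 1) := by
      obtain ⟨t, ht⟩ := hs; exact ⟨t - n - 1, by rw [ht]; push_cast; ring⟩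
    rw [hinv_eq n]
    simp only [Equiv.Perm.mul_apply]
    rw [hPninv n s hs, hσinv, hPnodd n _ h1]
    congr 1
    ring
  have hgo : ∀ (n : ℕ) (s : ZMod j), Odd s →
      (P ^ n * σ * (P ^ n)⁻¹)⁻¹ (x s) = x (s - 1 + 2 * n) := by
    intro n s hs
    have h1 : Even (s - 1) := by
      obtain ⟨t, ht⟩ := hs; exact ⟨t, by rw [ht]; ring⟩
    rw [hinv_eq n]
    simp only [Equiv.Perm.mul_apply]
    rw [hPninvodd n s hs, hσinv, hPn n _ h1]
  have hgout : ∀ (n : ℕ) (y : Fin m), (∀ r : ZMod j, y ≠ x r) →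
      (P ^ n * σ * (P ^ n)⁻¹)⁻¹ y = σ⁻¹ y := by
    intro n y hy
    rw [hinv_eq n]
    simp only [Equiv.Perm.mul_apply]
    rw [hPninvout n y hy, hPnout n _ (hσinvout y hy)]
  have hmul : ∀ (A B : Equiv.Perm (Fin m)) (y : Fin m), (A * B * A⁻¹) y = A (B (A⁻¹ y)) :=
    fun _ _ _ => rfl
  -- key lemma
  have hkey : ∀ c d e : ℕ, e + d ≡ 2 * c [MOD p] →
      (P ^ (c * κ) * σ * (P ^ (c * κ))⁻¹) * (P ^ (d * κ) * σ * (P ^ (d * κ))⁻¹) *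
        (P ^ (c * κ) * σ * (P ^ (c * κ))⁻¹)⁻¹
      = P ^ (e * κ) * σ * (P ^ (e * κ))⁻¹ := by
    intro c d e hcde
    have hZ : ((2 * κ * (e + d) : ℕ) : ZMod j) = ((2 * κ * (2 * c) : ℕ) : ZMod j) := by
      rw [ZMod.natCast_eq_natCast_iff, hj, show 2 * p * κ = 2 * κ * p from by ring]
      exact hcde.mul_left' (2 * κ)
    push_cast at hZ
    refine Equiv.ext fun y => ?_
    rw [hmul]
    rcases htri y with ⟨r, ⟨t, rfl⟩, rfl⟩ | ⟨r, ⟨t, rfl⟩, rfl⟩ | hy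
    · rw [hge (c * κ) (t + t) ⟨t, rfl⟩,
        hfo (d * κ) _ ⟨t - (↑(c * κ) : ZMod j) - 1, by ring⟩,
        hfe (c * κ) _ ⟨t - (↑(c * κ) : ZMod j) + (↑(d * κ) : ZMod j), by ring⟩,
        hfe (e * κ) (t + t) ⟨t, rfl⟩]
      refine congrArg x ?_
      push_cast
      linear_combination hZ
    · rw [hgo (c * κ) (2 * t + 1) ⟨t, rfl⟩,
        hfe (d * κ) _ ⟨t + (↑(c * κ) : ZMod j), by ring⟩,
        hfo (c * κ) _ ⟨t + (↑(c * κ) : ZMod j) - (↑(d * κ) : ZMod j), by ring⟩,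
        hfo (e * κ) (2 * t + 1) ⟨t, rfl⟩]
      refine congrArg x ?_
      push_cast
      linear_combination -hZ
    · rw [hgout (c * κ) y hy, hfout (d * κ) _ (hσinvout y hy),
        hfout (c * κ) _ (hσout _ (hσinvout y hy)), hfout (e * κ) y hy,
        Equiv.Perm.inv_def, Equiv.apply_symm_apply]
  -- injectivity
  have hinj : Function.Injective σfam := by
    intro i l h
    rw [hfam i, hfam l] at h
    have h0 := DFunLike.congr_fun h (x 0)
    rw [hfe (i.val * κ) 0 ⟨0, by ring⟩, hfe (l.val * κ) 0 ⟨0, by ring⟩] at h0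
    have e0 := hx h0
    have hcc : ((2 * κ * i.val : ℕ) : ZMod j) = ((2 * κ * l.val : ℕ) : ZMod j) := by
      push_cast at e0 ⊢
      linear_combination -e0
    rw [ZMod.natCast_eq_natCast_iff', hj] at hcc
    have hmod : ∀ a : ℕ, 2 * κ * a % (2 * p * κ) = 2 * κ * (a % p) := by
      intro a
      rw [show 2 * p * κ = 2 * κ * p from by ring, Nat.mul_mod_mul_left]
    rw [hmod, hmod] at hcc
    have h1 : i.val % p = l.val % p := Nat.eq_of_mul_eq_mul_left (by omega) hcc
    rw [Nat.mod_eq_of_lt (ZMod.val_lt i), Nat.mod_eq_of_lt (ZMod.val_lt l)] at h1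
    exact ZMod.val_injective p h1
  -- conjugacy
  have hconj : ∀ i : ZMod p, IsConj σ (σfam i) ∧ IsConj σ (σfam i)⁻¹ := by
    intro i
    constructor
    · rw [hfam i]
      exact isConj_iff.mpr ⟨P ^ (i.val * κ), rfl⟩
    · rw [hfam i, hinv_eq (i.val * κ)]
      have h2 : IsConj σ σ⁻¹ :=
        Equiv.Perm.isConj_iff_cycleType_eq.mpr (Equiv.Perm.cycleType_inv σ).symm
      exact h2.trans (isConj_iff.mpr ⟨P ^ (i.val * κ), rfl⟩)
  -- main D_p relation
  have hmain : ∀ i l : ZMod p, σfam i * σfam l * (σfam i)⁻¹ = σfam (2 * i - l) := by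
    intro i l
    rw [hfam i, hfam l, hfam (2 * i - l)]
    apply hkey
    rw [← ZMod.natCast_eq_natCast_iff]
    push_cast [ZMod.natCast_val, ZMod.cast_id]
    ring
  -- σ_t ≠ σ_l⁻¹
  have hne : ∀ t l : ZMod p, σfam t ≠ (σfam l)⁻¹ := by
    intro t l h
    rw [hfam t, hfam l] at h
    have h0 := DFunLike.congr_fun h (x 0)
    have h1 := DFunLike.congr_fun h (x 1)
    rw [hfe (t.val * κ) 0 ⟨0, by ring⟩, hge (l.val * κ) 0 ⟨0, by ring⟩] at h0
    rw [hfo (t.val * κ) 1 ⟨0, by ring⟩, hgo (l.val * κ) 1 ⟨0, by ring⟩] at h1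
    have e0 := hx h0
    have e1 := hx h1
    have h4 : ((4 : ℕ) : ZMod j) = ((0 : ℕ) : ZMod j) := by
      push_cast at e0 e1 ⊢
      linear_combination e0 + e1
    rw [ZMod.natCast_eq_natCast_iff', Nat.zero_mod, Nat.mod_eq_of_lt (by omega : 4 < j)] at h4
    omega
  refine ⟨hinj, hconj, hmain, hne, fun i l => ?_⟩
  have hb : (σfam i)⁻¹ * σfam l * σfam i = σfam (2 * i - l) := by
    have h2 := hmain i (2 * i - l)
    rw [show 2 * i - (2 * i - l) = l from by ring] at h2
    rw [← h2]
    group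
  refine ⟨?_, hb, ?_⟩
  · rw [← hmain i l]
    group
  · rw [← hb]
    group
end

section
/- Let q be a prime power with 3 | q−1, ω ∈ F_q a primitive third root of unity, and c ∈ F_q. For i ∈ ℤ/3 let μ_i be the 2×2 matrix over F_q with rows (0, ω^i) and (ω^{2i} c, 0). Then μ_i μ_j μ_i⁻¹ = μ_{2i−j} for all i, j ∈ ℤ/3, i.e., (μ_i)_{i∈ℤ/3} is a family of type D₃ in GL(2, F_q); if c = −1 each μ_i lies in SL(2, F_q). -/
/-- Let `F` be a finite field with `3 ∣ q − 1` (`q` the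
cardinality), `ω ∈ F` a primitive third root of unity, and `c ∈ F` nonzero.
For `i ∈ ℤ/3` let `μ_i = !![0, ω^i; ω^{2i}·c, 0]`.  Then
`μ_i μ_j μ_i⁻¹ = μ_{2i−j}` for all `i, j ∈ ℤ/3` (a family of type `D₃` in
`GL(2, F)`, each `μ_i` being invertible), and if `c = −1` each `μ_i` has
determinant `1`, i.e. lies in `SL(2, F)`. -/
theorem stmt15 {F : Type*} [Field F] [Fintype F]
    (hq : 3 ∣ Fintype.card F - 1)
    (ω : F) (hω3 : ω ^ 3 = 1) (hω1 : ω ≠ 1)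
    (c : F) (hc : c ≠ 0)
    (μ : ZMod 3 → Matrix (Fin 2) (Fin 2) F)
    (hμ : ∀ i : ZMod 3, μ i = !![0, ω ^ i.val; ω ^ (2 * i.val) * c, 0]) :
    (∀ i : ZMod 3, IsUnit (μ i)) ∧
    (∀ i j : ZMod 3, μ i * μ j * (μ i)⁻¹ = μ (2 * i - j)) ∧
    (c = -1 → ∀ i : ZMod 3, (μ i).det = 1) := by
  have hdet : ∀ i : ZMod 3, (μ i).det = -c := by
    intro i
    rw [hμ i]
    simp [Matrix.det_fin_two_of]
    have : ω ^ i.val * (ω ^ (2 * i.val) * c) = (ω ^ 3) ^ i.val * c := by ring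
    rw [this, hω3, one_pow, one_mul]
  have hunit : ∀ i : ZMod 3, IsUnit (μ i) := by
    intro i
    rw [Matrix.isUnit_iff_isUnit_det, hdet i]
    exact (neg_ne_zero.mpr hc).isUnit
  have hpow : ∀ m n : ℕ, ((m : ZMod 3) = (n : ZMod 3)) → ω ^ m = ω ^ n := by
    intro m n h
    have h' : m % 3 = n % 3 := (ZMod.natCast_eq_natCast_iff m n 3).mp h
    calc ω ^ m = ω ^ (3 * (m / 3) + m % 3) := by rw [Nat.div_add_mod]
      _ = ω ^ (m % 3) := by rw [pow_add, pow_mul, hω3, one_pow, one_mul]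
      _ = ω ^ (n % 3) := by rw [h']
      _ = ω ^ n := by
          rw [← one_mul (ω ^ (n % 3)), ← one_pow (n / 3), ← hω3, ← pow_mul, ← pow_add,
            Nat.div_add_mod]
  have hval : ∀ a : ZMod 3, ((a.val : ZMod 3)) = a := fun a => by
    rw [ZMod.natCast_val, ZMod.cast_id]
  have h3 : (3 : ZMod 3) = 0 := by decide
  refine ⟨hunit, ?_, ?_⟩
  · intro i j
    have key : μ i * μ j = μ (2 * i - j) * μ i := by
      rw [hμ i, hμ j, hμ (2 * i - j)]
      ext a b
      fin_cases a <;> fin_cases b <;> simp [Matrix.mul_apply, Fin.sum_univ_two] <;> ring_nf <;>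
        rw [← pow_add, ← pow_add] <;>
        · congr 1; apply hpow; push_cast [hval]; linear_combination (j - i) * h3
    calc μ i * μ j * (μ i)⁻¹ = μ (2 * i - j) * (μ i * (μ i)⁻¹) := by
          rw [key, Matrix.mul_assoc]
      _ = μ (2 * i - j) := by
          rw [Matrix.mul_nonsing_inv _ (by rw [hdet]; exact (neg_ne_zero.mpr hc).isUnit),
            Matrix.mul_one]
  · intro h i
    rw [hdet i, h, neg_neg]
end

section
/- Let (σ_i)_{1≤i≤6} be six distinct elements of a group G. If the ten relations σ₁▷σ₂=σ₅, σ₁▷σ₃=σ₂, σ₁▷σ₄=σ₃, σ₁▷σ₅=σ₄, σ₁▷σ₆=σ₆, σ₂▷σ₁=σ₃, σ₂▷σ₃=σ₆, σ₂▷σ₄=σ₄, σ₂▷σ₅=σ₁, σ₂▷σ₆=σ₅ hold (▷ denotes conjugation), then (σ_i) is of type 𝔒, i.e., σ_i ▷ σ_j = σ_{i▷j} for all 1 ≤ i, j ≤ 6, where i▷j is the octahedral rack operation. -/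
/-- The octahedral rack operation on `{1,…,6}` (encoded `0`-based on `Fin 6`). -/
def octo : Fin 6 → Fin 6 → Fin 6 := fun i j =>
  ![![0, 4, 1, 2, 3, 5],
    ![2, 1, 5, 3, 0, 4],
    ![3, 0, 2, 5, 4, 1],
    ![4, 1, 0, 3, 5, 2],
    ![1, 5, 2, 0, 4, 3],
    ![0, 2, 3, 4, 1, 5]] i j


private lemma invc {G : Type*} [Group G] {a x y : G} (h : a * x * a⁻¹ = y) :
    a⁻¹ * y * a = x := by rw [← h]; group

private lemma conjw {G : Type*} [Group G] (a b x : G) :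
    (a * b * a⁻¹) * x * (a * b * a⁻¹)⁻¹ = a * (b * (a⁻¹ * x * a) * b⁻¹) * a⁻¹ := by group

private lemma conjw' {G : Type*} [Group G] (a b x : G) :
    (a⁻¹ * b * a) * x * (a⁻¹ * b * a)⁻¹ = a⁻¹ * (b * (a * x * a⁻¹) * b⁻¹) * a := by group

/-- If six distinct elements `σ₁,…,σ₆` of a group `G` (here
`σ_i = σ (i−1)`) satisfy the ten relations `σ₁▷σ₂=σ₅`, `σ₁▷σ₃=σ₂`, `σ₁▷σ₄=σ₃`,
`σ₁▷σ₅=σ₄`, `σ₁▷σ₆=σ₆`, `σ₂▷σ₁=σ₃`, `σ₂▷σ₃=σ₆`, `σ₂▷σ₄=σ₄`, `σ₂▷σ₅=σ₁`,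
`σ₂▷σ₆=σ₅` (with `x ▷ y = x y x⁻¹`), then the family is of type `𝔒`:
`σ_i σ_j σ_i⁻¹ = σ_{i▷j}` for all `i, j`. -/
theorem stmt17 {G : Type*} [Group G] (σ : Fin 6 → G)
    (hinj : Function.Injective σ)
    (e12 : σ 0 * σ 1 * (σ 0)⁻¹ = σ 4)
    (e13 : σ 0 * σ 2 * (σ 0)⁻¹ = σ 1)
    (e14 : σ 0 * σ 3 * (σ 0)⁻¹ = σ 2)
    (e15 : σ 0 * σ 4 * (σ 0)⁻¹ = σ 3)
    (e16 : σ 0 * σ 5 * (σ 0)⁻¹ = σ 5)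
    (e21 : σ 1 * σ 0 * (σ 1)⁻¹ = σ 2)
    (e23 : σ 1 * σ 2 * (σ 1)⁻¹ = σ 5)
    (e24 : σ 1 * σ 3 * (σ 1)⁻¹ = σ 3)
    (e25 : σ 1 * σ 4 * (σ 1)⁻¹ = σ 0)
    (e26 : σ 1 * σ 5 * (σ 1)⁻¹ = σ 4) :
    ∀ i j : Fin 6, σ i * σ j * (σ i)⁻¹ = σ (octo i j) := by
  have t00 : σ 0 * σ 0 * (σ 0)⁻¹ = σ 0 := by group
  have t11 : σ 1 * σ 1 * (σ 1)⁻¹ = σ 1 := by group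
  have r20 : σ 2 * σ 0 * (σ 2)⁻¹ = σ 3 := by
    rw [← e21, conjw, invc (e25), e15]; exact e24
  have r21 : σ 2 * σ 1 * (σ 2)⁻¹ = σ 0 := by
    rw [← e21, conjw, invc (t11), e12]; exact e25
  have r22 : σ 2 * σ 2 * (σ 2)⁻¹ = σ 2 := by group
  have r23 : σ 2 * σ 3 * (σ 2)⁻¹ = σ 5 := by
    rw [← e21, conjw, invc (e24), e14]; exact e23
  have r24 : σ 2 * σ 4 * (σ 2)⁻¹ = σ 4 := by
    rw [← e21, conjw, invc (e26), e16]; exact e26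
  have r25 : σ 2 * σ 5 * (σ 2)⁻¹ = σ 1 := by
    rw [← e21, conjw, invc (e23), e13]; exact t11
  have h3 : σ 3 = (σ 0)⁻¹ * σ 2 * σ 0 := (invc e14).symm
  have r30 : σ 3 * σ 0 * (σ 3)⁻¹ = σ 4 := by
    rw [h3, conjw', t00, r20]; exact invc (e15)
  have r31 : σ 3 * σ 1 * (σ 3)⁻¹ = σ 1 := by
    rw [h3, conjw', e12, r24]; exact invc (e12)
  have r32 : σ 3 * σ 2 * (σ 3)⁻¹ = σ 0 := by
    rw [h3, conjw', e13, r21]; exact invc (t00)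
  have r33 : σ 3 * σ 3 * (σ 3)⁻¹ = σ 3 := by group
  have r34 : σ 3 * σ 4 * (σ 3)⁻¹ = σ 5 := by
    rw [h3, conjw', e15, r23]; exact invc (e16)
  have r35 : σ 3 * σ 5 * (σ 3)⁻¹ = σ 2 := by
    rw [h3, conjw', e16, r25]; exact invc (e13)
  have r40 : σ 4 * σ 0 * (σ 4)⁻¹ = σ 1 := by
    rw [← e12, conjw, invc (t00), e21]; exact e13
  have r41 : σ 4 * σ 1 * (σ 4)⁻¹ = σ 5 := by
    rw [← e12, conjw, invc (e13), e23]; exact e16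
  have r42 : σ 4 * σ 2 * (σ 4)⁻¹ = σ 2 := by
    rw [← e12, conjw, invc (e14), e24]; exact e14
  have r43 : σ 4 * σ 3 * (σ 4)⁻¹ = σ 0 := by
    rw [← e12, conjw, invc (e15), e25]; exact t00
  have r44 : σ 4 * σ 4 * (σ 4)⁻¹ = σ 4 := by group
  have r45 : σ 4 * σ 5 * (σ 4)⁻¹ = σ 3 := by
    rw [← e12, conjw, invc (e16), e26]; exact e15
  have r50 : σ 5 * σ 0 * (σ 5)⁻¹ = σ 0 := by
    rw [← e23, conjw, invc (e25), r24]; exact e25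
  have r51 : σ 5 * σ 1 * (σ 5)⁻¹ = σ 2 := by
    rw [← e23, conjw, invc (t11), r21]; exact e21
  have r52 : σ 5 * σ 2 * (σ 5)⁻¹ = σ 3 := by
    rw [← e23, conjw, invc (e21), r20]; exact e24
  have r53 : σ 5 * σ 3 * (σ 5)⁻¹ = σ 4 := by
    rw [← e23, conjw, invc (e24), r23]; exact e26
  have r54 : σ 5 * σ 4 * (σ 5)⁻¹ = σ 1 := by
    rw [← e23, conjw, invc (e26), r25]; exact t11
  have r55 : σ 5 * σ 5 * (σ 5)⁻¹ = σ 5 := by group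
  intro i j
  fin_cases i <;> fin_cases j <;> first
    | exact t00
    | exact e12
    | exact e13
    | exact e14
    | exact e15
    | exact e16
    | exact e21
    | exact t11
    | exact e23
    | exact e24
    | exact e25
    | exact e26
    | exact r20
    | exact r21
    | exact r22
    | exact r23
    | exact r24
    | exact r25
    | exact r30
    | exact r31
    | exact r32
    | exact r33
    | exact r34
    | exact r35
    | exact r40
    | exact r41
    | exact r42
    | exact r43
    | exact r44
    | exact r45
    | exact r50
    | exact r51
    | exact r52
    | exact r53
    | exact r54
    | exact r55
end

section
/- Let (σ_i)_{1≤i≤6} be a family of type 𝔒 in a group G. Then: (i) σ₁⁴ = σ₂⁴ = σ₃⁴ = σ₄⁴ = σ₅⁴ = σ₆⁴; (ii) σ₁σ₆ = σ₂σ₄ = σ₃σ₅; (iii) σ₂²σ₅² = σ₁³σ₆ = σ₃²σ₂²; (iv) σ₅²σ₂² = σ₁σ₆³ = σ₂²σ₃². -/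
private lemma sqeq {G : Type*} [Group G] (u v u' v' c : G) (h1 : u * v = v' * u)
    (h2 : v * u = u' * v) (h3 : u * u' = c) (h4 : v' * v = c) (h5 : v' * c = c * v') :
    u * u = v * v := by
  have e1 : v' * (v' * (u * u)) = c * c := by
    calc v' * (v' * (u * u)) = v' * ((v' * u) * u) := by rw [mul_assoc v' u u]
    _ = v' * ((u * v) * u) := by rw [h1]
    _ = v' * (u * (v * u)) := by rw [mul_assoc u v u]
    _ = v' * (u * (u' * v)) := by rw [h2]
    _ = v' * ((u * u') * v) := by rw [← mul_assoc u u' v]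
    _ = v' * (c * v) := by rw [h3]
    _ = (v' * c) * v := by rw [mul_assoc v' c v]
    _ = (c * v') * v := by rw [h5]
    _ = c * (v' * v) := by rw [mul_assoc c v' v]
    _ = c * c := by rw [h4]
  have e2 : v' * (v' * (v * v)) = c * c := by
    calc v' * (v' * (v * v)) = v' * ((v' * v) * v) := by rw [mul_assoc v' v v]
    _ = v' * (c * v) := by rw [h4]
    _ = (v' * c) * v := by rw [mul_assoc v' c v]
    _ = (c * v') * v := by rw [h5]
    _ = c * (v' * v) := by rw [mul_assoc c v' v]
    _ = c * c := by rw [h4]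
  exact mul_left_cancel (mul_left_cancel (e1.trans e2.symm))

/-- If `(σ_i)_{1≤i≤6}` (here `σ_i = σ (i−1)`) is a family of type
`𝔒` in a group `G`, then:
(i) `σ₁⁴ = σ₂⁴ = σ₃⁴ = σ₄⁴ = σ₅⁴ = σ₆⁴`;
(ii) `σ₁σ₆ = σ₂σ₄ = σ₃σ₅`;
(iii) `σ₂²σ₅² = σ₁³σ₆ = σ₃²σ₂²`;
(iv) `σ₅²σ₂² = σ₁σ₆³ = σ₂²σ₃²`. -/
theorem stmt18 {G : Type*} [Group G] (σ : Fin 6 → G)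
    (hinj : Function.Injective σ)
    (hO : ∀ i j : Fin 6, σ i * σ j * (σ i)⁻¹ = σ (octo i j)) :
    (σ 0 ^ 4 = σ 1 ^ 4 ∧ σ 1 ^ 4 = σ 2 ^ 4 ∧ σ 2 ^ 4 = σ 3 ^ 4 ∧
      σ 3 ^ 4 = σ 4 ^ 4 ∧ σ 4 ^ 4 = σ 5 ^ 4) ∧
    (σ 0 * σ 5 = σ 1 * σ 3 ∧ σ 1 * σ 3 = σ 2 * σ 4) ∧
    (σ 1 ^ 2 * σ 4 ^ 2 = σ 0 ^ 3 * σ 5 ∧ σ 0 ^ 3 * σ 5 = σ 2 ^ 2 * σ 1 ^ 2) ∧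
    (σ 4 ^ 2 * σ 1 ^ 2 = σ 0 * σ 5 ^ 3 ∧ σ 0 * σ 5 ^ 3 = σ 1 ^ 2 * σ 2 ^ 2) := by
  have pw2 : ∀ g : G, g ^ 2 = g * g := fun g => pow_two g
  have pw3 : ∀ g : G, g ^ 3 = g * (g * g) := fun g => by
    rw [show (3 : ℕ) = 1 + 2 from rfl, pow_add, pow_one, pow_two]
  have pw4 : ∀ g : G, g ^ 4 = g * g * (g * g) := fun g => by
    rw [show (4 : ℕ) = 2 + 2 from rfl, pow_add, pow_two]
  have key : ∀ i j, σ i * σ j = σ (octo i j) * σ i := fun i j => by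
    rw [← hO i j]; group
  have key' : ∀ i j k, octo i j = k → σ i * σ j = σ k * σ i := fun i j k h => by
    rw [key i j, h]
  have keyc : ∀ i j (x : G), σ i * (σ j * x) = σ (octo i j) * (σ i * x) := fun i j x => by
    rw [← mul_assoc (σ i) (σ j) x, key i j, mul_assoc (σ (octo i j)) (σ i) x]
  have keyc' : ∀ i j k, octo i j = k → ∀ x : G, σ i * (σ j * x) = σ k * (σ i * x) :=
    fun i j k h x => by rw [keyc i j x, h]
  have idf : ∀ i, octo 0 (octo 5 i) = i := by decide
  have zc : ∀ i, σ 0 * (σ 5 * σ i) = σ i * (σ 0 * σ 5) := fun i => by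
    rw [key 5 i, keyc 0 (octo 5 i) (σ 5), idf i]
  have zcc : ∀ i (x : G), σ 0 * (σ 5 * (σ i * x)) = σ i * (σ 0 * (σ 5 * x)) := fun i x => by
    rw [keyc 5 i x, keyc 0 (octo 5 i) (σ 5 * x), idf i]
  -- antipodal products all equal z = σ0 σ5
  have a13 : σ 1 * σ 3 = σ 0 * σ 5 := by
    have h : σ 2 * (σ 1 * σ 3) = σ 2 * (σ 0 * σ 5) := by
      rw [keyc' 2 1 0 (by decide), key' 2 3 5 (by decide)]; exact zc 2
    exact mul_left_cancel h
  have a24 : σ 2 * σ 4 = σ 0 * σ 5 := by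
    have h : σ 1 * (σ 2 * σ 4) = σ 1 * (σ 0 * σ 5) := by
      rw [keyc' 1 2 5 (by decide), key' 1 4 0 (by decide), ← zc 1,
        keyc' 5 0 0 (by decide)]
    exact mul_left_cancel h
  have a31 : σ 3 * σ 1 = σ 0 * σ 5 := (key' 3 1 1 (by decide)).trans a13
  have a42 : σ 4 * σ 2 = σ 0 * σ 5 := (key' 4 2 2 (by decide)).trans a24
  have a13c : ∀ x : G, σ 1 * (σ 3 * x) = σ 0 * (σ 5 * x) := fun x => by
    rw [← mul_assoc (σ 1) (σ 3) x, a13, mul_assoc (σ 0) (σ 5) x]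
  -- squares move past each other up to antipode
  have P1 : ∀ i j k₁ k₂, octo i j = k₁ → octo i k₁ = k₂ →
      σ i * (σ i * (σ j * σ j)) = σ k₂ * (σ k₂ * (σ i * σ i)) := by
    intro i j k₁ k₂ d1 d2
    rw [keyc' i j k₁ d1, keyc' i k₁ k₂ d2, key' i j k₁ d1, keyc' i k₁ k₂ d2]
  -- product of squares of an "antipodal" pair is z²
  have T : ∀ i j, σ i * σ j = σ 0 * σ 5 →
      σ i * (σ i * (σ j * σ j)) = σ 0 * (σ 5 * (σ 0 * σ 5)) := by
    intro i j hij
    calc σ i * (σ i * (σ j * σ j)) = σ i * ((σ i * σ j) * σ j) := by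
          rw [mul_assoc (σ i) (σ j) (σ j)]
    _ = σ i * ((σ 0 * σ 5) * σ j) := by rw [hij]
    _ = σ 0 * (σ 5 * (σ i * σ j)) := by
          rw [mul_assoc (σ 0) (σ 5) (σ j), ← zcc i (σ j)]
    _ = σ 0 * (σ 5 * (σ 0 * σ 5)) := by rw [hij]
  have zc4 : ∀ i, σ i * (σ i * (σ 0 * (σ 5 * (σ 0 * σ 5)))) =
      σ 0 * (σ 5 * (σ 0 * (σ 5 * (σ i * σ i)))) := fun i => by
    rw [zcc i (σ i), zcc i (σ 0 * (σ 5 * σ i)), zc i, zcc i (σ 0 * σ 5)]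
  have quart : ∀ i j ai aj k₁ m₁ : Fin 6, octo i j = k₁ → octo i k₁ = aj →
      octo j i = m₁ → octo j m₁ = ai → σ i * σ ai = σ 0 * σ 5 →
      σ aj * σ j = σ 0 * σ 5 → σ i ^ 4 = σ j ^ 4 := by
    intro i j ai aj k₁ m₁ d1 d2 d3 d4 e1 e2
    have h1 : σ i * σ i * (σ j * σ j) = σ aj * σ aj * (σ i * σ i) := by
      simpa only [mul_assoc] using P1 i j k₁ aj d1 d2
    have h2 : σ j * σ j * (σ i * σ i) = σ ai * σ ai * (σ j * σ j) := by
      simpa only [mul_assoc] using P1 j i m₁ ai d3 d4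
    have h3 : σ i * σ i * (σ ai * σ ai) = σ 0 * σ 5 * (σ 0 * σ 5) := by
      simpa only [mul_assoc] using T i ai e1
    have h4 : σ aj * σ aj * (σ j * σ j) = σ 0 * σ 5 * (σ 0 * σ 5) := by
      simpa only [mul_assoc] using T aj j e2
    have h5 : σ aj * σ aj * (σ 0 * σ 5 * (σ 0 * σ 5)) =
        σ 0 * σ 5 * (σ 0 * σ 5) * (σ aj * σ aj) := by
      simpa only [mul_assoc] using zc4 aj
    have q := sqeq (σ i * σ i) (σ j * σ j) (σ ai * σ ai) (σ aj * σ aj)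
      (σ 0 * σ 5 * (σ 0 * σ 5)) h1 h2 h3 h4 h5
    calc σ i ^ 4 = σ i * σ i * (σ i * σ i) := by simp only [pw2, pw3, pw4, mul_assoc]
    _ = σ j * σ j * (σ j * σ j) := q
    _ = σ j ^ 4 := by simp only [pw2, pw3, pw4, mul_assoc]
  -- the W-lemmas for (iii) and (iv)
  have E1 : σ 1 * (σ 0 * (σ 0 * σ 1)) = σ 2 * (σ 2 * (σ 1 * σ 1)) := by
    rw [keyc' 1 0 2 (by decide), keyc' 1 0 2 (by decide)]
  have E2 : σ 1 * (σ 0 * (σ 0 * σ 1)) = σ 0 * (σ 5 * (σ 0 * σ 0)) := by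
    rw [key' 0 1 4 (by decide), keyc' 0 4 3 (by decide), a13c]
  have W1 : σ 2 * (σ 2 * (σ 1 * σ 1)) = σ 0 * (σ 5 * (σ 0 * σ 0)) := E1.symm.trans E2
  have E3 : σ 1 * (σ 1 * (σ 2 * σ 2)) = σ 1 * (σ 5 * (σ 5 * σ 1)) := by
    rw [keyc' 1 2 5 (by decide), key' 1 2 5 (by decide)]
  have E4 : σ 1 * (σ 5 * (σ 5 * σ 1)) = σ 0 * (σ 5 * (σ 5 * σ 5)) := by
    rw [key' 5 1 2 (by decide), keyc' 5 2 3 (by decide), a13c]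
  have W2 : σ 1 * (σ 1 * (σ 2 * σ 2)) = σ 0 * (σ 5 * (σ 5 * σ 5)) := E3.trans E4
  refine ⟨⟨?_, ?_, ?_, ?_, ?_⟩, ⟨a13.symm, a13.trans a24.symm⟩, ⟨?_, ?_⟩, ⟨?_, ?_⟩⟩
  · exact quart 0 1 5 3 4 2 (by decide) (by decide) (by decide) (by decide) rfl a31
  · exact quart 1 2 3 4 5 0 (by decide) (by decide) (by decide) (by decide) a13 a42
  · exact quart 2 3 4 1 5 0 (by decide) (by decide) (by decide) (by decide) a24 a13
  · exact quart 3 4 1 2 5 0 (by decide) (by decide) (by decide) (by decide) a31 a24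
  · exact quart 4 5 2 0 3 1 (by decide) (by decide) (by decide) (by decide) a42 rfl
  · calc σ 1 ^ 2 * σ 4 ^ 2 = σ 1 * (σ 1 * (σ 4 * σ 4)) := by simp only [pw2, pw3, pw4, mul_assoc]
    _ = σ 2 * (σ 2 * (σ 1 * σ 1)) := P1 1 4 0 2 (by decide) (by decide)
    _ = σ 0 * (σ 5 * (σ 0 * σ 0)) := W1
    _ = σ 0 * (σ 0 * (σ 5 * σ 0)) := zcc 0 (σ 0)
    _ = σ 0 * (σ 0 * (σ 0 * σ 5)) := by rw [key' 5 0 0 (by decide)]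
    _ = σ 0 ^ 3 * σ 5 := by simp only [pw2, pw3, pw4, mul_assoc]
  · calc σ 0 ^ 3 * σ 5 = σ 0 * (σ 0 * (σ 0 * σ 5)) := by simp only [pw2, pw3, pw4, mul_assoc]
    _ = σ 0 * (σ 0 * (σ 5 * σ 0)) := by rw [key' 5 0 0 (by decide)]
    _ = σ 0 * (σ 5 * (σ 0 * σ 0)) := (zcc 0 (σ 0)).symm
    _ = σ 2 * (σ 2 * (σ 1 * σ 1)) := W1.symm
    _ = σ 2 ^ 2 * σ 1 ^ 2 := by simp only [pw2, pw3, pw4, mul_assoc]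
  · calc σ 4 ^ 2 * σ 1 ^ 2 = σ 4 * (σ 4 * (σ 1 * σ 1)) := by simp only [pw2, pw3, pw4, mul_assoc]
    _ = σ 1 * (σ 1 * (σ 2 * σ 2)) := (P1 1 2 5 4 (by decide) (by decide)).symm
    _ = σ 0 * (σ 5 * (σ 5 * σ 5)) := W2
    _ = σ 0 * σ 5 ^ 3 := by simp only [pw2, pw3, pw4, mul_assoc]
  · calc σ 0 * σ 5 ^ 3 = σ 0 * (σ 5 * (σ 5 * σ 5)) := by simp only [pw2, pw3, pw4, mul_assoc]
    _ = σ 1 * (σ 1 * (σ 2 * σ 2)) := W2.symm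
    _ = σ 1 ^ 2 * σ 2 ^ 2 := by simp only [pw2, pw3, pw4, mul_assoc]
end

section
/- Let (σ,τ) be of type 𝔒^{(2)} in a group G, i.e., (σ_i)_{1≤i≤6} and (τ_i)_{1≤i≤6} are each of type 𝔒 and σ_i τ_j σ_i⁻¹ = τ_{i▷j}, τ_i σ_j τ_i⁻¹ = σ_{i▷j} for all i, j. Then: (i) σ₁τ₆ = σ₆τ₁ = σ₂τ₄ = σ₄τ₂ = σ₃τ₅ = σ₅τ₃; (ii) σ_j⁻¹τ_j = σ₁⁻¹τ₁ for 2 ≤ j ≤ 6; (iii) τ₂⁻²σ₅τ₅ = τ₁⁻¹σ₆; (iv) τ₂⁻²σ₃τ₃ = σ₁τ₆⁻¹; (v) σ₂⁻²σ₅τ₅ = σ₁⁻²τ₁σ₆; (vi) σ₂⁻²σ₃τ₃ = τ₁σ₆⁻¹. -/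
/-- If `(σ, τ)` is of type `𝔒^{(2)}` in a group `G`
(twelve distinct elements, both families of type `𝔒`, and the crossed
conjugation relations hold; here `σ_i = σ (i−1)`, `τ_i = τ (i−1)`), then:
(i) `σ₁τ₆ = σ₆τ₁ = σ₂τ₄ = σ₄τ₂ = σ₃τ₅ = σ₅τ₃`;
(ii) `σ_j⁻¹τ_j = σ₁⁻¹τ₁` for all `j`;
(iii) `τ₂⁻²σ₅τ₅ = τ₁⁻¹σ₆`;
(iv) `τ₂⁻²σ₃τ₃ = σ₁τ₆⁻¹`;
(v) `σ₂⁻²σ₅τ₅ = σ₁⁻²τ₁σ₆`;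
(vi) `σ₂⁻²σ₃τ₃ = τ₁σ₆⁻¹`. -/
theorem stmt19 {G : Type*} [Group G] (σ τ : Fin 6 → G)
    (hinjσ : Function.Injective σ) (hinjτ : Function.Injective τ)
    (hστdisj : ∀ i j : Fin 6, σ i ≠ τ j)
    (hσ : ∀ i j : Fin 6, σ i * σ j * (σ i)⁻¹ = σ (octo i j))
    (hτ : ∀ i j : Fin 6, τ i * τ j * (τ i)⁻¹ = τ (octo i j))
    (hστ : ∀ i j : Fin 6, σ i * τ j * (σ i)⁻¹ = τ (octo i j))
    (hτσ : ∀ i j : Fin 6, τ i * σ j * (τ i)⁻¹ = σ (octo i j)) :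
    (σ 0 * τ 5 = σ 5 * τ 0 ∧ σ 5 * τ 0 = σ 1 * τ 3 ∧ σ 1 * τ 3 = σ 3 * τ 1 ∧
      σ 3 * τ 1 = σ 2 * τ 4 ∧ σ 2 * τ 4 = σ 4 * τ 2) ∧
    (∀ j : Fin 6, (σ j)⁻¹ * τ j = (σ 0)⁻¹ * τ 0) ∧
    ((τ 1 ^ 2)⁻¹ * σ 4 * τ 4 = (τ 0)⁻¹ * σ 5) ∧
    ((τ 1 ^ 2)⁻¹ * σ 2 * τ 2 = σ 0 * (τ 5)⁻¹) ∧
    ((σ 1 ^ 2)⁻¹ * σ 4 * τ 4 = (σ 0 ^ 2)⁻¹ * τ 0 * σ 5) ∧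
    ((σ 1 ^ 2)⁻¹ * σ 2 * τ 2 = τ 0 * (σ 5)⁻¹) := by
  -- z_j := σ_j⁻¹ τ_j commutes with every σ k
  have zcs : ∀ j k : Fin 6, ((σ j)⁻¹ * τ j) * σ k = σ k * ((σ j)⁻¹ * τ j) := by
    intro j k
    have key : τ j * σ k * (τ j)⁻¹ = σ j * σ k * (σ j)⁻¹ := (hτσ j k).trans (hσ j k).symm
    calc ((σ j)⁻¹ * τ j) * σ k = (σ j)⁻¹ * (τ j * σ k * (τ j)⁻¹) * τ j := by group
      _ = (σ j)⁻¹ * (σ j * σ k * (σ j)⁻¹) * τ j := by rw [key]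
      _ = σ k * ((σ j)⁻¹ * τ j) := by group
  -- all z_j are equal along the rack action
  have zeqgen : ∀ k j : Fin 6, (σ (octo k j))⁻¹ * τ (octo k j) = (σ j)⁻¹ * τ j := by
    intro k j
    calc (σ (octo k j))⁻¹ * τ (octo k j)
        = (σ k * σ j * (σ k)⁻¹)⁻¹ * (σ k * τ j * (σ k)⁻¹) := by rw [hσ k j, hστ k j]
      _ = σ k * ((σ j)⁻¹ * τ j) * (σ k)⁻¹ := by group
      _ = ((σ j)⁻¹ * τ j) * σ k * (σ k)⁻¹ := by rw [← zcs j k]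
      _ = (σ j)⁻¹ * τ j := by group
  obtain ⟨z, hz⟩ : ∃ z : G, z = (σ 0)⁻¹ * τ 0 := ⟨_, rfl⟩
  have z1 : (σ 1)⁻¹ * τ 1 = z := (zeqgen 4 0).trans hz.symm
  have z2 : (σ 2)⁻¹ * τ 2 = z := (zeqgen 1 0).trans hz.symm
  have z3 : (σ 3)⁻¹ * τ 3 = z := (zeqgen 2 0).trans hz.symm
  have z4 : (σ 4)⁻¹ * τ 4 = z := (zeqgen 3 0).trans hz.symm
  have z5 : (σ 5)⁻¹ * τ 5 = z := (zeqgen 4 1).trans z1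
  -- τ in terms of σ and z
  have t0 : τ 0 = σ 0 * z := by rw [hz]; group
  have t1 : τ 1 = σ 1 * z := by rw [← z1]; group
  have t2 : τ 2 = σ 2 * z := by rw [← z2]; group
  have t3 : τ 3 = σ 3 * z := by rw [← z3]; group
  have t4 : τ 4 = σ 4 * z := by rw [← z4]; group
  have t5 : τ 5 = σ 5 * z := by rw [← z5]; group
  -- z commutes with all σ k : push rules
  have zs : ∀ k : Fin 6, z * σ k = σ k * z := by
    intro k
    rw [hz]
    exact zcs 0 k
  have cz : ∀ k : Fin 6, Commute z (σ k) := zs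
  have p2 : ∀ (k : Fin 6) (w : G), z * (σ k * w) = σ k * (z * w) := by
    intro k w; rw [← mul_assoc, zs, mul_assoc]
  have p3 : ∀ k : Fin 6, z⁻¹ * σ k = σ k * z⁻¹ := fun k => ((cz k).inv_left).eq
  have p4 : ∀ (k : Fin 6) (w : G), z⁻¹ * (σ k * w) = σ k * (z⁻¹ * w) := by
    intro k w; rw [← mul_assoc, p3, mul_assoc]
  have p5 : ∀ k : Fin 6, z * (σ k)⁻¹ = (σ k)⁻¹ * z := fun k => ((cz k).inv_right).eq
  have p6 : ∀ (k : Fin 6) (w : G), z * ((σ k)⁻¹ * w) = (σ k)⁻¹ * (z * w) := by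
    intro k w; rw [← mul_assoc, p5, mul_assoc]
  have p7 : ∀ k : Fin 6, z⁻¹ * (σ k)⁻¹ = (σ k)⁻¹ * z⁻¹ := fun k => ((cz k).inv_left.inv_right).eq
  have p8 : ∀ (k : Fin 6) (w : G), z⁻¹ * ((σ k)⁻¹ * w) = (σ k)⁻¹ * (z⁻¹ * w) := by
    intro k w; rw [← mul_assoc, p7, mul_assoc]
  -- numeral instances of hσ
  have h05 : σ 0 * σ 5 * (σ 0)⁻¹ = σ 5 := hσ 0 5
  have h13 : σ 1 * σ 3 * (σ 1)⁻¹ = σ 3 := hσ 1 3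
  have h24 : σ 2 * σ 4 * (σ 2)⁻¹ = σ 4 := hσ 2 4
  have h15 : σ 1 * σ 5 * (σ 1)⁻¹ = σ 4 := hσ 1 5
  have h54 : σ 5 * σ 4 * (σ 5)⁻¹ = σ 1 := hσ 5 4
  have h40 : σ 4 * σ 0 * (σ 4)⁻¹ = σ 1 := hσ 4 0
  have h50 : σ 5 * σ 0 * (σ 5)⁻¹ = σ 0 := hσ 5 0
  have h10 : σ 1 * σ 0 * (σ 1)⁻¹ = σ 2 := hσ 1 0
  have h02 : σ 0 * σ 2 * (σ 0)⁻¹ = σ 1 := hσ 0 2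
  have h25 : σ 2 * σ 5 * (σ 2)⁻¹ = σ 1 := hσ 2 5
  have h51 : σ 5 * σ 1 * (σ 5)⁻¹ = σ 2 := hσ 5 1
  have h52 : σ 5 * σ 2 * (σ 5)⁻¹ = σ 3 := hσ 5 2
  have h03 : σ 0 * σ 3 * (σ 0)⁻¹ = σ 2 := hσ 0 3
  have h20 : σ 2 * σ 0 * (σ 2)⁻¹ = σ 3 := hσ 2 0
  -- commutations
  have C1 : σ 0 * σ 5 = σ 5 * σ 0 := by
    calc σ 0 * σ 5 = (σ 0 * σ 5 * (σ 0)⁻¹) * σ 0 := by group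
      _ = σ 5 * σ 0 := by rw [h05]
  have Ccomm13 : σ 1 * σ 3 = σ 3 * σ 1 := by
    calc σ 1 * σ 3 = (σ 1 * σ 3 * (σ 1)⁻¹) * σ 1 := by group
      _ = σ 3 * σ 1 := by rw [h13]
  have Ccomm24 : σ 2 * σ 4 = σ 4 * σ 2 := by
    calc σ 2 * σ 4 = (σ 2 * σ 4 * (σ 2)⁻¹) * σ 2 := by group
      _ = σ 4 * σ 2 := by rw [h24]
  -- σ0σ5 commutes with σ1 and σ2
  have Cc1 : σ 0 * σ 5 * σ 1 = σ 1 * (σ 0 * σ 5) := by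
    calc σ 0 * σ 5 * σ 1 = σ 0 * (σ 5 * σ 1 * (σ 5)⁻¹) * σ 5 := by group
      _ = σ 0 * σ 2 * σ 5 := by rw [h51]
      _ = (σ 0 * σ 2 * (σ 0)⁻¹) * (σ 0 * σ 5) := by group
      _ = σ 1 * (σ 0 * σ 5) := by rw [h02]
  have Cc2 : σ 0 * σ 5 * σ 2 = σ 2 * (σ 0 * σ 5) := by
    calc σ 0 * σ 5 * σ 2 = σ 0 * (σ 5 * σ 2 * (σ 5)⁻¹) * σ 5 := by group
      _ = σ 0 * σ 3 * σ 5 := by rw [h52]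
      _ = (σ 0 * σ 3 * (σ 0)⁻¹) * (σ 0 * σ 5) := by group
      _ = σ 2 * (σ 0 * σ 5) := by rw [h03]
  have C24 : σ 2 * σ 4 = σ 0 * σ 5 := by
    calc σ 2 * σ 4 = (σ 1 * σ 0 * (σ 1)⁻¹) * (σ 1 * σ 5 * (σ 1)⁻¹) := by rw [h10, h15]
      _ = σ 1 * (σ 0 * σ 5) * (σ 1)⁻¹ := by group
      _ = (σ 0 * σ 5 * σ 1) * (σ 1)⁻¹ := by rw [← Cc1]
      _ = σ 0 * σ 5 := by group
  have C31 : σ 3 * σ 1 = σ 0 * σ 5 := by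
    calc σ 3 * σ 1 = (σ 2 * σ 0 * (σ 2)⁻¹) * (σ 2 * σ 5 * (σ 2)⁻¹) := by rw [h20, h25]
      _ = σ 2 * (σ 0 * σ 5) * (σ 2)⁻¹ := by group
      _ = (σ 0 * σ 5 * σ 2) * (σ 2)⁻¹ := by rw [← Cc2]
      _ = σ 0 * σ 5 := by group
  have C13 : σ 1 * σ 3 = σ 0 * σ 5 := Ccomm13.trans C31
  have C42 : σ 4 * σ 2 = σ 0 * σ 5 := Ccomm24.symm.trans C24
  have Cinv05 : (σ 0)⁻¹ * (σ 5)⁻¹ = (σ 5)⁻¹ * (σ 0)⁻¹ :=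
    ((show Commute (σ 0) (σ 5) from C1).inv_left.inv_right).eq
  -- key word identities
  have WA : (σ 1)⁻¹ * (σ 1)⁻¹ * σ 4 * σ 4 * (σ 5)⁻¹ * σ 0 = 1 := by
    calc (σ 1)⁻¹ * (σ 1)⁻¹ * σ 4 * σ 4 * (σ 5)⁻¹ * σ 0
        = (σ 1)⁻¹ * σ 5 * (σ 1)⁻¹ * σ 4 * (σ 5)⁻¹ * σ 0 := by rw [← h15]; group
      _ = σ 5 * (σ 4)⁻¹ * (σ 1)⁻¹ * σ 4 * (σ 5)⁻¹ * σ 0 := by rw [← h54]; group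
      _ = σ 5 * (σ 0)⁻¹ * (σ 5)⁻¹ * σ 0 := by rw [← h40]; group
      _ = σ 5 * ((σ 0)⁻¹ * (σ 5)⁻¹) * σ 0 := by group
      _ = σ 5 * ((σ 5)⁻¹ * (σ 0)⁻¹) * σ 0 := by rw [Cinv05]
      _ = 1 := by group
  have A : (σ 1)⁻¹ * (σ 1)⁻¹ * σ 4 * σ 4 = (σ 0)⁻¹ * σ 5 := by
    calc (σ 1)⁻¹ * (σ 1)⁻¹ * σ 4 * σ 4
        = ((σ 1)⁻¹ * (σ 1)⁻¹ * σ 4 * σ 4 * (σ 5)⁻¹ * σ 0) * ((σ 0)⁻¹ * σ 5) := by group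
      _ = 1 * ((σ 0)⁻¹ * σ 5) := by rw [WA]
      _ = (σ 0)⁻¹ * σ 5 := one_mul _
  have WB : (σ 1)⁻¹ * (σ 1)⁻¹ * σ 2 * σ 2 * σ 5 * (σ 0)⁻¹ = 1 := by
    calc (σ 1)⁻¹ * (σ 1)⁻¹ * σ 2 * σ 2 * σ 5 * (σ 0)⁻¹
        = (σ 1)⁻¹ * σ 0 * (σ 1)⁻¹ * σ 2 * σ 5 * (σ 0)⁻¹ := by rw [← h10]; group
      _ = σ 0 * (σ 2)⁻¹ * (σ 1)⁻¹ * σ 2 * σ 5 * (σ 0)⁻¹ := by rw [← h02]; group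
      _ = 1 := by rw [← h25]; group
  have B : (σ 1)⁻¹ * (σ 1)⁻¹ * σ 2 * σ 2 = σ 0 * (σ 5)⁻¹ := by
    calc (σ 1)⁻¹ * (σ 1)⁻¹ * σ 2 * σ 2
        = ((σ 1)⁻¹ * (σ 1)⁻¹ * σ 2 * σ 2 * σ 5 * (σ 0)⁻¹) * (σ 0 * (σ 5)⁻¹) := by group
      _ = 1 * (σ 0 * (σ 5)⁻¹) := by rw [WB]
      _ = σ 0 * (σ 5)⁻¹ := one_mul _
  refine ⟨⟨?_, ?_, ?_, ?_, ?_⟩, ?_, ?_, ?_, ?_, ?_⟩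
  · calc σ 0 * τ 5 = (σ 0 * σ 5) * z := by rw [t5, mul_assoc]
      _ = (σ 5 * σ 0) * z := by rw [C1]
      _ = σ 5 * τ 0 := by rw [t0, mul_assoc]
  · calc σ 5 * τ 0 = (σ 5 * σ 0) * z := by rw [t0, mul_assoc]
      _ = (σ 0 * σ 5) * z := by rw [← C1]
      _ = (σ 1 * σ 3) * z := by rw [C13]
      _ = σ 1 * τ 3 := by rw [t3, mul_assoc]
  · calc σ 1 * τ 3 = (σ 1 * σ 3) * z := by rw [t3, mul_assoc]
      _ = (σ 3 * σ 1) * z := by rw [Ccomm13]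
      _ = σ 3 * τ 1 := by rw [t1, mul_assoc]
  · calc σ 3 * τ 1 = (σ 3 * σ 1) * z := by rw [t1, mul_assoc]
      _ = (σ 0 * σ 5) * z := by rw [C31]
      _ = (σ 2 * σ 4) * z := by rw [C24]
      _ = σ 2 * τ 4 := by rw [t4, mul_assoc]
  · calc σ 2 * τ 4 = (σ 2 * σ 4) * z := by rw [t4, mul_assoc]
      _ = (σ 4 * σ 2) * z := by rw [Ccomm24]
      _ = σ 4 * τ 2 := by rw [t2, mul_assoc]
  · intro j
    fin_cases j
    · rfl
    · exact z1.trans hz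
    · exact z2.trans hz
    · exact z3.trans hz
    · exact z4.trans hz
    · exact z5.trans hz
  · rw [t1, t4, t0]
    simp only [pow_two, mul_inv_rev, mul_assoc, zs, p2, p3, p4, p5, p6, p7, p8,
      inv_mul_cancel, mul_inv_cancel, one_mul, mul_one,
      inv_mul_cancel_left, mul_inv_cancel_left]
    simpa [mul_assoc] using congrArg (· * z⁻¹) A
  · rw [t1, t2, t5]
    simp only [pow_two, mul_inv_rev, mul_assoc, zs, p2, p3, p4, p5, p6, p7, p8,
      inv_mul_cancel, mul_inv_cancel, one_mul, mul_one,
      inv_mul_cancel_left, mul_inv_cancel_left]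
    simpa [mul_assoc] using congrArg (· * z⁻¹) B
  · rw [t4, t0]
    simp only [pow_two, mul_inv_rev, mul_assoc, zs, p2, p3, p4, p5, p6, p7, p8,
      inv_mul_cancel, mul_inv_cancel, one_mul, mul_one,
      inv_mul_cancel_left, mul_inv_cancel_left]
    simpa [mul_assoc] using congrArg (· * z) A
  · rw [t2, t0]
    simp only [pow_two, mul_inv_rev, mul_assoc, zs, p2, p3, p4, p5, p6, p7, p8,
      inv_mul_cancel, mul_inv_cancel, one_mul, mul_one,
      inv_mul_cancel_left, mul_inv_cancel_left]
    simpa [mul_assoc] using congrArg (· * z) B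
end
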